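/- arXiv:1801.10416 — 6 statements merged into one kernel-verified Lean document; each statement's English description precedes it below -/
import Mathlib

section
/- Let φ be a 3-CNF formula with variables x_1,…,x_η and clauses c_1,…,c_μ, and let G_φ with its clustering and source s be the associated CluBFS instance. If φ is satisfiable, then there exists a clustered spanning tree T of G_φ rooted at s with cost(T) ≤ 3η + 8μ. -/
open SimpleGraph

inductive SatVtx (η μ : ℕ) where
  | s : SatVtx η μ
  | pos : Fin η → SatVtx η μ
  | neg : Fin η → SatVtx η μ
  | cl : Fin μ → Fin 3 → SatVtx η μ
  deriving DecidableEq, Fintype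

def satRel {η μ : ℕ} (φ : Fin μ → Fin 3 → Fin η × Bool) :
    SatVtx η μ → SatVtx η μ → Prop
  | .s, .pos _ => True
  | .s, .neg _ => True
  | .pos i, .neg i' => i = i'
  | .cl j k, .cl j' k' => j = j' ∧ k ≠ k'
  | .cl j k, .pos i => φ j k = (i, true)
  | .cl j k, .neg i => φ j k = (i, false)
  | _, _ => False

def satGraph {η μ : ℕ} (φ : Fin μ → Fin 3 → Fin η × Bool) : SimpleGraph (SatVtx η μ) :=
  SimpleGraph.fromRel (satRel φ)

def IsCST {V : Type*} (G : SimpleGraph V) (𝒞 : Set (Set V)) (T : SimpleGraph V) : Prop :=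
  T ≤ G ∧ T.IsTree ∧ ∀ C ∈ 𝒞, (T.induce C).Connected

def satClusters (η μ : ℕ) : Set (Set (SatVtx η μ)) :=
  {{SatVtx.s}} ∪ {S | ∃ i, S = {SatVtx.pos i, SatVtx.neg i}} ∪
    {S | ∃ j, S = {x | ∃ k, x = SatVtx.cl j k}}

section Aux

variable {η μ : ℕ} (φ : Fin μ → Fin 3 → Fin η × Bool) (a : Fin η → Bool) (k : Fin μ → Fin 3)

/-- The vertex associated to a literal. -/
def satLit {η μ : ℕ} (p : Fin η × Bool) : SatVtx η μ :=
  if p.2 then .pos p.1 else .neg p.1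

/-- Parent map for the spanning tree. -/
def satParent : SatVtx η μ → SatVtx η μ
  | .s => .s
  | .pos i => if a i then .s else .neg i
  | .neg i => if a i then .pos i else .s
  | .cl j k' => if k' = k j then satLit (φ j k') else .cl j (k j)

/-- Depth of each vertex in the spanning tree. -/
def satDepth : SatVtx η μ → ℕ
  | .s => 0
  | .pos i => if a i then 1 else 2
  | .neg i => if a i then 2 else 1
  | .cl j k' => if k' = k j then 2 else 3

/-- The spanning tree. -/
def satTree : SimpleGraph (SatVtx η μ) :=
  SimpleGraph.fromRel (fun u v => u ≠ .s ∧ v = satParent φ a k u)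

variable (hk : ∀ j, a (φ j (k j)).1 = (φ j (k j)).2)

include hk in
lemma satDepth_parent : ∀ v : SatVtx η μ, v ≠ .s →
    satDepth a k (satParent φ a k v) + 1 = satDepth a k v := by
  intro v hv
  match v with
  | .s => exact absurd rfl hv
  | .pos i =>
      by_cases h : a i = true <;> simp [satParent, satDepth, h]
  | .neg i =>
      by_cases h : a i = true <;> simp [satParent, satDepth, h]
  | .cl j k' =>
      by_cases h : k' = k j
      · subst h
        have := hk j
        rcases hp : φ j (k j) with ⟨i, b⟩
        rw [hp] at this
        cases b <;>
          simp_all [satParent, satDepth, satLit, hp]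
      · have : k j ≠ k j → False := fun h => h rfl
        simp [satParent, satDepth, h]

include hk in
lemma satParent_ne (v : SatVtx η μ) (hv : v ≠ .s) : satParent φ a k v ≠ v := by
  intro h
  have := satDepth_parent φ a k hk v hv
  rw [h] at this
  omega

include hk in
lemma satTree_adj_parent (v : SatVtx η μ) (hv : v ≠ .s) :
    (satTree φ a k).Adj v (satParent φ a k v) := by
  rw [satTree, fromRel_adj]
  exact ⟨fun h => satParent_ne φ a k hk v hv h.symm, Or.inl ⟨hv, rfl⟩⟩

/-- every edge of the tree comes from the parent map -/
lemma satTree_adj_cases {u v : SatVtx η μ} (h : (satTree φ a k).Adj u v) :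
    (u ≠ .s ∧ v = satParent φ a k u) ∨ (v ≠ .s ∧ u = satParent φ a k v) := by
  rw [satTree, fromRel_adj] at h
  exact h.2

include hk in
lemma satTree_adj_down {u v : SatVtx η μ} (h : (satTree φ a k).Adj u v)
    (hle : satDepth a k v ≤ satDepth a k u) : v = satParent φ a k u ∧ u ≠ .s := by
  rcases satTree_adj_cases φ a k h with ⟨h1, h2⟩ | ⟨h1, h2⟩
  · exact ⟨h2, h1⟩
  · have := satDepth_parent φ a k hk v h1
    rw [← h2] at this
    omega

lemma satTree_le : satTree φ a k ≤ satGraph φ := by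
  intro u v h
  rw [satTree, fromRel_adj] at h
  rw [satGraph, fromRel_adj]
  refine ⟨h.1, ?_⟩
  have key : ∀ w : SatVtx η μ, w ≠ .s →
      satRel φ w (satParent φ a k w) ∨ satRel φ (satParent φ a k w) w := by
    intro w hw
    match w with
    | .s => exact absurd rfl hw
    | .pos i =>
        by_cases h : a i = true <;> simp [satParent, satRel, h]
    | .neg i =>
        by_cases h : a i = true <;> simp [satParent, satRel, h]
    | .cl j k' =>
        by_cases h : k' = k j
        · subst h
          rcases hp : φ j (k j) with ⟨i, b⟩
          cases b <;> simp [satParent, satRel, satLit, hp]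
        · simp [satParent, satRel, h]
  rcases h.2 with ⟨h1, h2⟩ | ⟨h1, h2⟩
  · subst h2; exact key u h1
  · subst h2; exact (key v h1).symm

lemma satDepth_pos (v : SatVtx η μ) (hv : v ≠ .s) : 0 < satDepth a k v := by
  match v with
  | .s => exact absurd rfl hv
  | .pos i => by_cases h : a i = true <;> simp [satDepth, h]
  | .neg i => by_cases h : a i = true <;> simp [satDepth, h]
  | .cl j k' => by_cases h : k' = k j <;> simp [satDepth, h]

include hk in
lemma satTree_exists_walk : ∀ (n : ℕ) (v : SatVtx η μ), satDepth a k v ≤ n →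
    ∃ w : (satTree φ a k).Walk v .s, w.length = satDepth a k v := by
  intro n
  induction n with
  | zero =>
      intro v hv
      have hvs : v = .s := by
        by_contra h
        have := satDepth_pos a k v h
        omega
      subst hvs
      exact ⟨.nil, by simp [satDepth]⟩
  | succ n ih =>
      intro v hv
      by_cases hvs : v = .s
      · subst hvs; exact ⟨.nil, by simp [satDepth]⟩
      · have hd := satDepth_parent φ a k hk v hvs
        obtain ⟨w, hw⟩ := ih (satParent φ a k v) (by omega)
        exact ⟨.cons (satTree_adj_parent φ a k hk v hvs) w, by simp [hw]; omega⟩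

include hk in
lemma satTree_connected : (satTree φ a k).Connected := by
  rw [connected_iff]
  refine ⟨fun u v => ?_, ⟨.s⟩⟩
  obtain ⟨wu, _⟩ := satTree_exists_walk φ a k hk (satDepth a k u) u le_rfl
  obtain ⟨wv, _⟩ := satTree_exists_walk φ a k hk (satDepth a k v) v le_rfl
  exact wu.reachable.trans wv.reachable.symm

include hk in
lemma satTree_acyclic : (satTree φ a k).IsAcyclic := by
  intro v c hc
  -- pick a vertex of maximal depth on the cycle
  obtain ⟨x, hx, hmax⟩ := Finset.exists_max_image c.support.toFinset (satDepth a k)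
    ⟨v, by simp [c.start_mem_support]⟩
  rw [List.mem_toFinset] at hx
  have hmax' : ∀ y ∈ (c.rotate x hx).support, satDepth a k y ≤ satDepth a k x := by
    intro y hy
    rw [(c.rotate x hx).support_eq_cons, List.mem_cons] at hy
    rcases hy with rfl | hy
    · exact le_rfl
    · apply hmax
      rw [List.mem_toFinset]
      have := (Walk.support_rotate c x hx).mem_iff.mp hy
      exact List.mem_of_mem_tail this
  have H : ∃ c' : (satTree φ a k).Walk x x, c'.IsCycle ∧
      ∀ y ∈ c'.support, satDepth a k y ≤ satDepth a k x :=
    ⟨c.rotate x hx, hc.rotate hx, hmax'⟩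
  clear hmax' hx hmax hc
  obtain ⟨c', hc', hmax⟩ := H
  cases c' with
  | nil => exact absurd hc'.three_le_length (by simp)
  | cons hxy p =>
      rename_i y
      have hedges : (Walk.cons hxy p).edges = s(x, y) :: p.edges := rfl
      have hnodup := hc'.edges_nodup
      rw [hedges, List.nodup_cons] at hnodup
      have hy : y = satParent φ a k x ∧ x ≠ SatVtx.s := by
        refine satTree_adj_down φ a k hk hxy (hmax y ?_)
        simp [Walk.support_cons, p.start_mem_support]
      have hxney : x ≠ y := by
        intro h; rw [← h] at hy; exact satParent_ne φ a k hk x hy.2 hy.1.symm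
      obtain ⟨z, hxz, q, hq⟩ := p.reverse.exists_eq_cons_of_ne hxney
      have hz : z = satParent φ a k x := by
        refine (satTree_adj_down φ a k hk hxz (hmax z ?_)).1
        have : z ∈ p.reverse.support := by rw [hq]; simp
        rw [Walk.support_reverse, List.mem_reverse] at this
        simp [Walk.support_cons, this]
      have hmem : s(x, z) ∈ p.edges := by
        have : s(x, z) ∈ p.reverse.edges := by rw [hq]; simp
        rwa [Walk.edges_reverse, List.mem_reverse] at this
      rw [hz, ← hy.1] at hmem
      exact hnodup.1 hmem

include hk in
lemma satTree_dist (v : SatVtx η μ) :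
    (satTree φ a k).dist SatVtx.s v ≤ satDepth a k v := by
  obtain ⟨w, hw⟩ := satTree_exists_walk φ a k hk (satDepth a k v) v le_rfl
  rw [SimpleGraph.dist_comm]
  exact hw ▸ SimpleGraph.dist_le w

def satEquiv (η μ : ℕ) : SatVtx η μ ≃ (Unit ⊕ Fin η ⊕ Fin η ⊕ Fin μ × Fin 3) where
  toFun v := match v with
    | .s => Sum.inl ()
    | .pos i => Sum.inr (Sum.inl i)
    | .neg i => Sum.inr (Sum.inr (Sum.inl i))
    | .cl j k' => Sum.inr (Sum.inr (Sum.inr (j, k')))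
  invFun x := match x with
    | Sum.inl _ => .s
    | Sum.inr (Sum.inl i) => .pos i
    | Sum.inr (Sum.inr (Sum.inl i)) => .neg i
    | Sum.inr (Sum.inr (Sum.inr (j, k'))) => .cl j k'
  left_inv v := by cases v <;> rfl
  right_inv x := by rcases x with _ | i | i | ⟨j, k'⟩ <;> rfl

lemma sum_satDepth : ∑ v : SatVtx η μ, satDepth a k v = 3 * η + 8 * μ := by
  have := Fintype.sum_equiv (satEquiv η μ).symm
    (fun x => satDepth a k ((satEquiv η μ).symm x)) (satDepth a k) (fun x => rfl)
  rw [← this, Fintype.sum_sum_type, Fintype.sum_sum_type, Fintype.sum_sum_type,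
    Fintype.sum_prod_type]
  have h1 : ∀ x : Unit, satDepth a k ((satEquiv η μ).symm (Sum.inl x)) = 0 := fun _ => rfl
  simp only [satEquiv, Equiv.coe_fn_symm_mk]
  have h8 : ∀ c : Fin 3, (∑ k3 : Fin 3, if k3 = c then 2 else 3) = 8 := by decide
  have hvar : (∑ i : Fin η, satDepth a k (.pos i)) + ∑ i : Fin η, satDepth a k (.neg i)
      = 3 * η := by
    rw [← Finset.sum_add_distrib]
    have : ∀ i : Fin η, satDepth a k (SatVtx.pos i) + satDepth a k (SatVtx.neg i) = 3 := by
      intro i; by_cases h : a i = true <;> simp [satDepth, h]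
    simp [this, Finset.sum_const, mul_comm]
  have hcl : (∑ j : Fin μ, ∑ k3 : Fin 3, satDepth a k (SatVtx.cl j k3)) = 8 * μ := by
    have : ∀ j : Fin μ, (∑ k3 : Fin 3, satDepth a k (SatVtx.cl j k3)) = 8 := by
      intro j
      simpa [satDepth] using h8 (k j)
    simp [this, Finset.sum_const, mul_comm]
  show (∑ _x : Unit, satDepth a k SatVtx.s) + ((∑ i : Fin η, satDepth a k (.pos i)) +
    ((∑ i : Fin η, satDepth a k (.neg i)) +
      ∑ j : Fin μ, ∑ k3 : Fin 3, satDepth a k (SatVtx.cl j k3))) = 3 * η + 8 * μ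
  have hs : (∑ _x : Unit, satDepth a k SatVtx.s) = 0 := by simp [satDepth]
  omega

end Aux

theorem stmt0 (η μ : ℕ) (φ : Fin μ → Fin 3 → Fin η × Bool)
    (hsat : ∃ a : Fin η → Bool, ∀ j, ∃ k, a (φ j k).1 = (φ j k).2) :
    ∃ T : SimpleGraph (SatVtx η μ), IsCST (satGraph φ) (satClusters η μ) T ∧
      ∑ v, T.dist SatVtx.s v ≤ 3 * η + 8 * μ := by
  obtain ⟨a, ha⟩ := hsat
  choose k hk using ha
  refine ⟨satTree φ a k, ⟨satTree_le φ a k,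
    ⟨satTree_connected φ a k hk, satTree_acyclic φ a k hk⟩, ?_⟩, ?_⟩
  · rintro C hC
    rcases hC with (hC | ⟨i, rfl⟩) | ⟨j, rfl⟩
    · rw [Set.mem_singleton_iff] at hC
      subst hC
      rw [connected_iff]
      refine ⟨fun u v => ?_, ⟨⟨SatVtx.s, rfl⟩⟩⟩
      have : u = v := Subtype.ext (u.2.trans v.2.symm)
      exact this ▸ Reachable.refl _
    · have hadj : (satTree φ a k).Adj (SatVtx.pos i) (SatVtx.neg i) := by
        by_cases h : a i = true
        · have := satTree_adj_parent φ a k hk (SatVtx.neg i) (by simp)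
          simp only [satParent, if_pos h] at this
          exact this.symm
        · have := satTree_adj_parent φ a k hk (SatVtx.pos i) (by simp)
          simpa [satParent, h] using this
      rw [connected_iff]
      refine ⟨?_, ⟨⟨SatVtx.pos i, by simp⟩⟩⟩
      have key : ∀ u : ↥({SatVtx.pos i, SatVtx.neg i} : Set (SatVtx η μ)),
          ((satTree φ a k).induce _).Reachable u ⟨SatVtx.pos i, by simp⟩ := by
        rintro ⟨u, hu⟩
        simp only [Set.mem_insert_iff, Set.mem_singleton_iff] at hu
        rcases hu with rfl | rfl
        · exact Reachable.refl _
        · exact Adj.reachable (by exact hadj.symm)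
      intro u v
      exact (key u).trans (key v).symm
    · have hadj : ∀ k', k' ≠ k j →
          (satTree φ a k).Adj (SatVtx.cl j k') (SatVtx.cl j (k j)) := by
        intro k' h
        have := satTree_adj_parent φ a k hk (SatVtx.cl j k') (by simp)
        simpa [satParent, h] using this
      rw [connected_iff]
      refine ⟨?_, ⟨⟨SatVtx.cl j (k j), ⟨k j, rfl⟩⟩⟩⟩
      have key : ∀ u : ↥({x | ∃ k', x = SatVtx.cl j k'} : Set (SatVtx η μ)),
          ((satTree φ a k).induce _).Reachable u ⟨SatVtx.cl j (k j), ⟨k j, rfl⟩⟩ := by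
        rintro ⟨u, k', rfl⟩
        by_cases h : k' = k j
        · subst h; exact Reachable.refl _
        · exact Adj.reachable (by exact hadj k' h)
      intro u v
      exact (key u).trans (key v).symm
  · calc ∑ v, (satTree φ a k).dist SatVtx.s v ≤ ∑ v, satDepth a k v :=
          Finset.sum_le_sum fun v _ => satTree_dist φ a k hk v
      _ = 3 * η + 8 * μ := sum_satDepth a k
end

section
/- Let G, clusters C_1,…,C_k, source s ∈ C_1, γ, and the tree T̃ produced by the cluster-contraction BFS construction be as in the context. Then for every clustered spanning tree T* of G rooted at s, cost(T̃) ≤ 2γ·cost(T*). -/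
open SimpleGraph

/-- The clusters `C i` form a partition of the vertex set:
they are nonempty, pairwise disjoint, and cover every vertex. -/
def IsPartition {V : Type*} {k : ℕ} (C : Fin k → Set V) : Prop :=
  (∀ i, (C i).Nonempty) ∧ (Pairwise fun i j => Disjoint (C i) (C j)) ∧
    (⋃ i, C i) = Set.univ

/-- `T` is a clustered spanning tree of `G`: a spanning tree such that each
cluster induces a connected subgraph (a subtree) of `T`. -/
def IsClusteredSpanningTree {V : Type*} {k : ℕ} (G : SimpleGraph V) (C : Fin k → Set V)
    (T : SimpleGraph V) : Prop :=
  T ≤ G ∧ T.IsTree ∧ ∀ i, (T.induce (C i)).Connected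

/-- The cluster-contraction of a graph: vertices are the cluster indices, with an
edge between two distinct clusters iff some edge of `G` joins them (loops deleted). -/
def contractClusters {V : Type*} {k : ℕ} (G : SimpleGraph V) (C : Fin k → Set V) :
    SimpleGraph (Fin k) where
  Adj i j := i ≠ j ∧ ∃ u ∈ C i, ∃ v ∈ C j, G.Adj u v
  symm := ⟨by
    rintro i j ⟨hij, u, hu, v, hv, huv⟩
    exact ⟨hij.symm, v, hv, u, hu, huv.symm⟩⟩
  loopless := ⟨by rintro i ⟨hii, -⟩; exact hii rfl⟩


/-- `T` is a BFS tree of `H` rooted at `r`: a spanning tree of `H` in which the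
distance from `r` to every vertex equals its distance in `H`. -/
def IsBFSTree {V : Type*} (H T : SimpleGraph V) (r : V) : Prop :=
  T ≤ H ∧ T.IsTree ∧ ∀ v, T.dist r v = H.dist r v

/-- The diameter of the subgraph of `G` induced by the set `C`:
the largest distance between two of its vertices. -/
noncomputable def clusterDiam {V : Type*} (G : SimpleGraph V) (C : Set V) : ℕ :=
  sSup {d | ∃ u v : C, (G.induce C).dist u v = d}

section TreeAux
variable {V : Type*} {T : SimpleGraph V}

lemma aux_concat_path {u v w : V} {p : T.Walk u v} (hp : p.IsPath) (hw : w ∉ p.support)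
    (h : T.Adj v w) : (p.concat h).IsPath := by
  rw [← Walk.isPath_reverse_iff, Walk.reverse_concat]
  exact Walk.IsPath.cons hp.reverse (by simpa [Walk.support_reverse] using hw)

lemma aux_path_unique (hT : T.IsAcyclic) {u v : V} {p q : T.Walk u v}
    (hp : p.IsPath) (hq : q.IsPath) : p = q := by
  have := (SimpleGraph.isAcyclic_iff_path_unique.mp hT) ⟨p, hp⟩ ⟨q, hq⟩
  exact congrArg Subtype.val this

lemma aux_tree_dist_adj (hT : T.IsTree) (s : V) {x y : V} (h : T.Adj x y) :
    T.dist s y = T.dist s x + 1 ∨ T.dist s x = T.dist s y + 1 := by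
  classical
  have hxy1 : T.dist x y = 1 := SimpleGraph.dist_eq_one_iff_adj.mpr h
  have h1 : T.dist s y ≤ T.dist s x + 1 := by
    have := hT.isConnected.dist_triangle (u := s) (v := x) (w := y)
    omega
  have h2 : T.dist s x ≤ T.dist s y + 1 := by
    have := hT.isConnected.dist_triangle (u := s) (v := y) (w := x)
    have hyx : T.dist y x = 1 := SimpleGraph.dist_eq_one_iff_adj.mpr h.symm
    omega
  by_contra hcon
  push_neg at hcon
  have heq : T.dist s x = T.dist s y := by omega
  -- contradiction
  obtain ⟨P, hPpath, hPlen⟩ := hT.isConnected.exists_path_of_dist s x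
  by_cases hmem : y ∈ P.support
  · have hsplit := P.take_spec hmem
    have hlen : (P.takeUntil y hmem).length + (P.dropUntil y hmem).length = P.length := by
      rw [← Walk.length_append, hsplit]
    have hd1 : T.dist s y ≤ (P.takeUntil y hmem).length := SimpleGraph.dist_le _
    have hd2 : T.dist y x ≤ (P.dropUntil y hmem).length := SimpleGraph.dist_le _
    have hyx : T.dist y x = 1 := SimpleGraph.dist_eq_one_iff_adj.mpr h.symm
    omega
  · have hQpath : (P.concat h).IsPath := aux_concat_path hPpath hmem h
    obtain ⟨R, hRpath, hRlen⟩ := hT.isConnected.exists_path_of_dist s y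
    have := aux_path_unique hT.IsAcyclic hQpath hRpath
    have hlen : (P.concat h).length = R.length := by rw [this]
    rw [Walk.length_concat, hPlen, hRlen] at hlen
    omega

lemma aux_tree_unique_parent (hT : T.IsTree) (s : V) {x u v : V}
    (hu : T.Adj u x) (hv : T.Adj v x) (hdu : T.dist s u + 1 = T.dist s x)
    (hdv : T.dist s v + 1 = T.dist s x) : u = v := by
  classical
  obtain ⟨Pu, hPupath, hPulen⟩ := hT.isConnected.exists_path_of_dist s u
  obtain ⟨Pv, hPvpath, hPvlen⟩ := hT.isConnected.exists_path_of_dist s v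
  have hxu : x ∉ Pu.support := by
    intro hmem
    have h1 : T.dist s x ≤ (Pu.takeUntil x hmem).length := SimpleGraph.dist_le _
    have h2 := Walk.length_takeUntil_le Pu hmem
    omega
  have hxv : x ∉ Pv.support := by
    intro hmem
    have h1 : T.dist s x ≤ (Pv.takeUntil x hmem).length := SimpleGraph.dist_le _
    have h2 := Walk.length_takeUntil_le Pv hmem
    omega
  have hQu : (Pu.concat hu).IsPath := aux_concat_path hPupath hxu hu
  have hQv : (Pv.concat hv).IsPath := aux_concat_path hPvpath hxv hv
  have heq := aux_path_unique hT.IsAcyclic hQu hQv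
  have h1 : (Pu.concat hu).reverse.getVert 1 = u := by
    rw [Walk.reverse_concat]
    exact (Walk.getVert_cons_succ _ _).trans (Walk.getVert_zero _)
  have h2 : (Pv.concat hv).reverse.getVert 1 = v := by
    rw [Walk.reverse_concat]
    exact (Walk.getVert_cons_succ _ _).trans (Walk.getVert_zero _)
  rw [← h1, ← h2, heq]

lemma aux_tree_ascend (hT : T.IsTree) (s : V) {x v : V} (q : T.Walk x v) :
    ∀ {y : V} (h : T.Adj y x),
      (Walk.cons h q).IsPath → T.dist s x = T.dist s y + 1 →
      T.dist s v = T.dist s x + q.length := by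
  induction q with
  | nil => intro y h hp hd; simp
  | @cons a b w h2 q2 ih =>
    intro y h hp hd
    rcases aux_tree_dist_adj hT s h2 with hz | hz
    · have hp2 : (Walk.cons h2 q2).IsPath := hp.of_cons
      have := ih h2 hp2 hz
      rw [this, hz]
      simp [Walk.length_cons]
      omega
    · exfalso
      have hyb : y = b := by
        refine aux_tree_unique_parent hT s (x := a) h h2.symm ?_ ?_ <;> omega
      have : y ∉ (Walk.cons h2 q2).support := (Walk.cons_isPath_iff _ _ |>.mp hp).2
      apply this
      rw [hyb]
      simp [Walk.support_cons]
  
lemma aux_cluster_unique_min (hT : T.IsTree) (s : V) {Cj : Set V}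
    (hcon : (T.induce Cj).Connected) {D : ℕ}
    (hlow : ∀ w ∈ Cj, D ≤ T.dist s w) {u v : V} (hu : u ∈ Cj) (hv : v ∈ Cj)
    (hdu : T.dist s u = D) (hdv : T.dist s v = D) : u = v := by
  classical
  by_contra hne
  obtain ⟨w⟩ := hcon.preconnected ⟨u, hu⟩ ⟨v, hv⟩
  have hw : T.Walk u v := w.map (SimpleGraph.Embedding.induce Cj).toHom
  set W : T.Walk u v := w.map (SimpleGraph.Embedding.induce Cj).toHom with hW
  have hsupp : ∀ z ∈ W.support, z ∈ Cj := by
    intro z hz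
    have hz' : z ∈ (w.map (SimpleGraph.Embedding.induce Cj).toHom).support := hz
    rw [Walk.support_map] at hz'
    obtain ⟨z', _, rfl⟩ := List.mem_map.mp hz'
    exact z'.2
  have hsuppB : ∀ z ∈ W.bypass.support, z ∈ Cj := fun z hz =>
    hsupp z (Walk.support_bypass_subset _ hz)
  have hBpath := W.bypass_isPath
  set P := W.bypass with hP
  clear_value P
  cases P with
  | nil => exact hne rfl
  | @cons _ b _ h q =>
    have hb : b ∈ Cj := by
      apply hsuppB
      simp [Walk.support_cons]
    rcases aux_tree_dist_adj hT s h with hz | hz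
    · have := aux_tree_ascend hT s q h hBpath hz
      have hqb : b ∈ Cj := hb
      have := hlow v hv
      have hlb := hlow b hb
      omega
    · have hlb := hlow b hb
      omega
end TreeAux

lemma aux_proj_walk {V : Type*} {k : ℕ} {G : SimpleGraph V} {C : Fin k → Set V}
    (c : V → Fin k) (hc : ∀ v, v ∈ C (c v)) {u v : V} (p : G.Walk u v) :
    ∃ q : (contractClusters G C).Walk (c u) (c v), q.length ≤ p.length := by
  induction p with
  | nil => exact ⟨Walk.nil, le_rfl⟩
  | @cons a b w h p ih =>
    obtain ⟨q, hq⟩ := ih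
    by_cases he : c a = c b
    · exact ⟨q.copy he.symm rfl, by simpa using Nat.le_succ_of_le hq⟩
    · exact ⟨Walk.cons ⟨he, a, hc a, b, hc b, h⟩ q, by rw [Walk.length_cons]; exact Nat.succ_le_succ hq⟩


theorem stmt5 {V : Type*} [Fintype V] (G : SimpleGraph V) (hG : G.Connected)
    {k : ℕ} (C : Fin k → Set V) (hpart : IsPartition C)
    (hconn : ∀ i, (G.induce (C i)).Connected)
    (s : V) (i₀ : Fin k) (hs : s ∈ C i₀)
    (γ : ℕ) (hγdef : γ = ⨆ i, clusterDiam G (C i)) (hγ : 1 ≤ γ)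
    -- `Tt` is the clustered spanning tree produced by the cluster-contraction BFS
    -- construction:
    (Tt : SimpleGraph V) (hTt : IsClusteredSpanningTree G C Tt)
    (r : Fin k → V) (hr : ∀ j, r j ∈ C j) (hr0 : r i₀ = s)
    -- (a) the contraction of `Tt` is a BFS tree of the contraction of `G` rooted at `C i₀`:
    (ha : IsBFSTree (contractClusters G C) (contractClusters Tt C) i₀)
    -- (b) each cluster induces in `Tt` a BFS tree of `G[C j]` rooted at `r j`:
    (hb : ∀ j, IsBFSTree (G.induce (C j)) (Tt.induce (C j)) ⟨r j, hr j⟩)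
    -- for `j ≠ i₀`, `r j` is the endpoint in `C j` of the unique edge of `Tt`
    -- joining `C j` to its parent cluster in the contracted BFS tree:
    (hparent : ∀ j, j ≠ i₀ → ∃ pcl : Fin k, (contractClusters Tt C).Adj pcl j ∧
      (contractClusters Tt C).dist i₀ pcl + 1 = (contractClusters Tt C).dist i₀ j ∧
      ∃ x ∈ C pcl, Tt.Adj x (r j)) :
    ∀ Tstar : SimpleGraph V, IsClusteredSpanningTree G C Tstar →
      ∑ v, Tt.dist s v ≤ 2 * γ * ∑ v, Tstar.dist s v := by
  classical
  intro Tstar hstar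
  obtain ⟨hCne, hdisj, hcover⟩ := hpart
  obtain ⟨hTtle, hTtTree, hTtCl⟩ := hTt
  obtain ⟨hSle, hSTree, hSCl⟩ := hstar
  -- the cluster function
  have hex : ∀ v : V, ∃ i, v ∈ C i := fun v =>
    Set.mem_iUnion.mp (hcover ▸ Set.mem_univ v)
  choose c hc using hex
  have hceq : ∀ {v : V} {j : Fin k}, v ∈ C j → c v = j := by
    intro v j hvj
    by_contra hne'
    exact Set.disjoint_left.mp (hdisj hne') (hc v) hvj
  have hcs : c s = i₀ := hceq hs
  set T' := contractClusters Tt C with hT'def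
  have hT'tree : T'.IsTree := ha.2.1
  set D : Fin k → ℕ := fun j => T'.dist i₀ j with hDdef
  -- U1 : within a cluster, distances from the root are at most γ
  have hU1 : ∀ j, ∀ v ∈ C j, Tt.dist (r j) v ≤ γ := by
    intro j v hv
    have hreach : (Tt.induce (C j)).Reachable ⟨r j, hr j⟩ ⟨v, hv⟩ :=
      (hTtCl j).preconnected _ _
    obtain ⟨p, hp⟩ := hreach.exists_walk_length_eq_dist
    have hle1 : Tt.dist (r j) v ≤ (Tt.induce (C j)).dist ⟨r j, hr j⟩ ⟨v, hv⟩ := by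
      have := SimpleGraph.dist_le (p.map (SimpleGraph.Embedding.induce (C j)).toHom)
      rwa [Walk.length_map, hp] at this
    have heq := (hb j).2.2 ⟨v, hv⟩
    have hbdd : BddAbove {d | ∃ u w : ↥(C j), (G.induce (C j)).dist u w = d} := by
      have hsub : {d | ∃ u w : ↥(C j), (G.induce (C j)).dist u w = d} ⊆
          Set.range (fun p : ↥(C j) × ↥(C j) => (G.induce (C j)).dist p.1 p.2) := by
        rintro d ⟨u, w, rfl⟩; exact ⟨(u, w), rfl⟩
      exact ((Set.finite_range _).bddAbove).mono hsub
    have h1 : (G.induce (C j)).dist ⟨r j, hr j⟩ ⟨v, hv⟩ ≤ clusterDiam G (C j) :=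
      le_csSup hbdd ⟨_, _, rfl⟩
    have h2 : clusterDiam G (C j) ≤ γ := by
      rw [hγdef]
      exact le_ciSup (f := fun i => clusterDiam G (C i)) (Set.finite_range _).bddAbove j
    omega
  -- U2 : the cluster roots
  have hU2 : ∀ n, ∀ j, D j = n → Tt.dist s (r j) ≤ (γ + 1) * n := by
    intro n
    induction n using Nat.strong_induction_on with
    | _ n ih =>
      intro j hj
      by_cases hji : j = i₀
      · subst hji; rw [hr0, SimpleGraph.dist_self]; exact Nat.zero_le _
      · obtain ⟨pcl, hadj, hdist, x, hx, hxr⟩ := hparent j hji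
        have hDrel : D pcl + 1 = D j := hdist
        have hpn : D pcl < n := by omega
        have h1 := ih (D pcl) hpn pcl rfl
        have h2 : Tt.dist s (r j) ≤ Tt.dist s x + 1 := by
          have ht := hTtTree.isConnected.dist_triangle (u := s) (v := x) (w := r j)
          have : Tt.dist x (r j) = 1 := SimpleGraph.dist_eq_one_iff_adj.mpr hxr
          omega
        have h3 : Tt.dist s x ≤ Tt.dist s (r pcl) + γ := by
          have ht := hTtTree.isConnected.dist_triangle (u := s) (v := r pcl) (w := x)
          have := hU1 pcl x hx
          omega
        have hn : n = D pcl + 1 := by omega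
        have : (γ + 1) * n = (γ + 1) * D pcl + γ + 1 := by rw [hn]; ring
        omega
  -- L1 : lower bound by contracted distance
  have hL1 : ∀ v, D (c v) ≤ Tstar.dist s v := by
    intro v
    obtain ⟨p, hp⟩ := hSTree.isConnected.exists_walk_length_eq_dist s v
    obtain ⟨q, hq⟩ := aux_proj_walk c hc ((p.mapLe hSle))
    have h1 : (contractClusters G C).dist (c s) (c v) ≤ Tstar.dist s v := by
      have := SimpleGraph.dist_le q
      have hlen : (p.mapLe hSle).length = p.length := Walk.length_map _ _
      omega
    rw [hcs] at h1
    have h2 := ha.2.2 (c v)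
    have h3 : T'.dist i₀ (c v) ≤ Tstar.dist s v := by omega
    exact h3
  -- per-cluster fibers
  set S : Fin k → Finset V := fun j => Finset.univ.filter (fun v => c v = j) with hSdef
  have hmemS : ∀ {v : V} {j : Fin k}, v ∈ S j ↔ c v = j := by
    intro v j; simp [hSdef]
  have key : ∀ j, ∑ v ∈ S j, Tt.dist s v ≤ 2 * γ * ∑ v ∈ S j, Tstar.dist s v := by
    intro j
    set m := (S j).card with hm
    have hrj : r j ∈ S j := hmemS.mpr (hceq (hr j))
    -- upper bound
    have hub : ∑ v ∈ S j, Tt.dist s v ≤ m * ((γ + 1) * D j) + (m - 1) * γ := by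
      have step : ∀ v ∈ S j, Tt.dist s v ≤ (γ + 1) * D j + (if v = r j then 0 else γ) := by
        intro v hv
        have hvC : v ∈ C j := by
          have := hmemS.mp hv; exact this ▸ hc v
        have h2 := hU2 (D j) j rfl
        by_cases hvr : v = r j
        · subst hvr; simp only [if_pos rfl]; omega
        · have h1 := hU1 j v hvC
          have ht := hTtTree.isConnected.dist_triangle (u := s) (v := r j) (w := v)
          simp only [if_neg hvr]; omega
      calc ∑ v ∈ S j, Tt.dist s v
          ≤ ∑ v ∈ S j, ((γ + 1) * D j + (if v = r j then 0 else γ)) :=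
            Finset.sum_le_sum step
        _ = m * ((γ + 1) * D j) + ∑ v ∈ S j, (if v = r j then 0 else γ) := by
            rw [Finset.sum_add_distrib, Finset.sum_const, smul_eq_mul]
        _ ≤ m * ((γ + 1) * D j) + (m - 1) * γ := by
            have : ∑ v ∈ S j, (if v = r j then 0 else γ) ≤ (m - 1) * γ := by
              have h0 : ∑ v ∈ S j, (if v = r j then 0 else γ)
                  = ∑ v ∈ (S j).erase (r j), (if v = r j then 0 else γ) := by
                rw [← Finset.add_sum_erase _ _ hrj]; simp
              rw [h0]
              calc ∑ v ∈ (S j).erase (r j), (if v = r j then 0 else γ)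
                  ≤ ∑ _v ∈ (S j).erase (r j), γ :=
                    Finset.sum_le_sum (fun v _ => by split <;> omega)
                _ = (m - 1) * γ := by
                    rw [Finset.sum_const, smul_eq_mul, Finset.card_erase_of_mem hrj]
            omega
    -- lower bound
    have hcard1 : ((S j).filter (fun v => Tstar.dist s v = D j)).card ≤ 1 := by
      apply Finset.card_le_one.mpr
      intro a ha' b hb'
      obtain ⟨haS, hda⟩ := Finset.mem_filter.mp ha'
      obtain ⟨hbS, hdb⟩ := Finset.mem_filter.mp hb'
      have haC : a ∈ C j := (hmemS.mp haS) ▸ hc a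
      have hbC : b ∈ C j := (hmemS.mp hbS) ▸ hc b
      refine aux_cluster_unique_min hSTree s (hSCl j) ?_ haC hbC hda hdb
      intro w hw
      have := hL1 w
      rwa [hceq hw] at this
    have hlb : m * D j + (m - 1) ≤ ∑ v ∈ S j, Tstar.dist s v := by
      have step : ∀ v ∈ S j, D j + (if Tstar.dist s v = D j then 0 else 1) ≤ Tstar.dist s v := by
        intro v hv
        have h1 := hL1 v
        rw [hmemS.mp hv] at h1
        split <;> omega
      have hsum : ∑ v ∈ S j, (D j + (if Tstar.dist s v = D j then 0 else 1))
          = m * D j + ((S j).filter (fun v => ¬ Tstar.dist s v = D j)).card := by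
        rw [Finset.sum_add_distrib, Finset.sum_const, smul_eq_mul]
        congr 1
        rw [Finset.sum_ite, Finset.sum_const, Finset.sum_const]
        simp
      have hcards := Finset.card_filter_add_card_filter_not
        (s := S j) (fun v => Tstar.dist s v = D j)
      calc m * D j + (m - 1)
          ≤ ∑ v ∈ S j, (D j + (if Tstar.dist s v = D j then 0 else 1)) := by
            rw [hsum]; omega
        _ ≤ ∑ v ∈ S j, Tstar.dist s v := Finset.sum_le_sum step
    -- combine
    calc ∑ v ∈ S j, Tt.dist s v
        ≤ m * ((γ + 1) * D j) + (m - 1) * γ := hub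
      _ ≤ 2 * γ * (m * D j + (m - 1)) := by
          have e1 : m * ((γ + 1) * D j) ≤ 2 * γ * (m * D j) := by
            calc m * ((γ + 1) * D j) = (γ + 1) * (m * D j) := by ring
              _ ≤ 2 * γ * (m * D j) := Nat.mul_le_mul_right _ (by omega)
          have e2 : (m - 1) * γ ≤ 2 * γ * (m - 1) := by
            calc (m - 1) * γ = γ * (m - 1) := by ring
              _ ≤ 2 * γ * (m - 1) := Nat.mul_le_mul_right _ (by omega)
          calc m * ((γ + 1) * D j) + (m - 1) * γ
              ≤ 2 * γ * (m * D j) + 2 * γ * (m - 1) := Nat.add_le_add e1 e2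
            _ = 2 * γ * (m * D j + (m - 1)) := by ring
      _ ≤ 2 * γ * ∑ v ∈ S j, Tstar.dist s v := Nat.mul_le_mul_left _ hlb
  -- assemble
  have hd1 : ∑ v, Tt.dist s v = ∑ j, ∑ v ∈ S j, Tt.dist s v :=
    (Finset.sum_fiberwise_of_maps_to (fun v _ => Finset.mem_univ (c v)) _).symm
  have hd2 : ∑ v, Tstar.dist s v = ∑ j, ∑ v ∈ S j, Tstar.dist s v :=
    (Finset.sum_fiberwise_of_maps_to (fun v _ => Finset.mem_univ (c v)) _).symm
  rw [hd1, hd2, Finset.mul_sum]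
  exact Finset.sum_le_sum (fun j _ => key j)
end

section
/- Let T be a finite tree with a distinguished root vertex s, and suppose T contains (as a subgraph) a path P with γ ≥ 1 edges, i.e., on γ+1 distinct vertices. Then Σ_{v ∈ V(P)} d_T(s,v) ≥ γ²/4 + γ/2 if γ is even, and Σ_{v ∈ V(P)} d_T(s,v) ≥ γ²/4 + γ/2 + 1/4 if γ is odd; in particular, Σ_{v ∈ V(P)} d_T(s,v) ≥ γ²/4. -/
open SimpleGraph Finset

namespace MyAux

variable {V : Type*} {G : SimpleGraph V}

lemma length_drop' {u v : V} (p : G.Walk u v) : ∀ n, (p.drop n).length = p.length - n := by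
  induction p with
  | nil => intro n; cases n <;> simp [SimpleGraph.Walk.drop]
  | cons h q ih =>
    intro n
    cases n with
    | zero => simp [SimpleGraph.Walk.drop]
    | succ n => simp [SimpleGraph.Walk.drop, ih]

lemma getVert_drop' {u v : V} (p : G.Walk u v) : ∀ n i, (p.drop n).getVert i = p.getVert (n + i) := by
  induction p with
  | nil => intro n i; cases n <;> simp [SimpleGraph.Walk.drop] <;> rfl
  | cons h q ih =>
    intro n i
    cases n with
    | zero => simp [SimpleGraph.Walk.drop]
    | succ n =>
      simp only [SimpleGraph.Walk.drop, Walk.getVert_copy, ih]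
      exact (ih n i).trans (by rw [show n + 1 + i = (n + i) + 1 by omega, Walk.getVert_cons_succ])

lemma isPath_drop' {u v : V} (p : G.Walk u v) (hp : p.IsPath) : ∀ n, (p.drop n).IsPath := by
  induction p with
  | nil => intro n; cases n <;> simp [SimpleGraph.Walk.drop]
  | cons h q ih =>
    intro n
    cases n with
    | zero =>
      simp only [SimpleGraph.Walk.drop, Walk.isPath_copy]
      exact hp
    | succ n =>
      simp only [SimpleGraph.Walk.drop, Walk.isPath_copy]
      exact ih ((Walk.cons_isPath_iff _ _).mp hp).1 n

lemma support_eq' {u v : V} (p : G.Walk u v) :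
    p.support = (List.range (p.length + 1)).map p.getVert := by
  induction p with
  | nil => rfl
  | cons h q ih =>
    rw [Walk.support_cons, ih, Walk.length_cons]
    conv_rhs => rw [List.range_succ_eq_map, List.map_cons, List.map_map]
    congr 1

lemma dist_eq_length' (hT : G.IsTree) {u v : V} (p : G.Walk u v) (hp : p.IsPath) :
    G.dist u v = p.length := by
  refine le_antisymm (SimpleGraph.dist_le p) ?_
  obtain ⟨q, hq, hql⟩ := hT.isConnected.exists_path_of_dist u v
  have : q = p := by
    have := hT.IsAcyclic.path_unique ⟨q, hq⟩ ⟨p, hp⟩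
    exact congrArg Subtype.val this
  subst this
  omega

lemma dist_getVert' (hT : G.IsTree) {u v : V} (p : G.Walk u v) (hp : p.IsPath) {i j : ℕ}
    (hij : i ≤ j) (hj : j ≤ p.length) :
    G.dist (p.getVert i) (p.getVert j) = j - i := by
  set q := ((p.drop i).reverse.drop (p.length - j)) with hq
  have hx : ((p.drop i).reverse).getVert (p.length - j) = p.getVert j := by
    rw [Walk.getVert_reverse, length_drop', getVert_drop']
    congr 1
    omega
  have hqp : q.IsPath := isPath_drop' _ ((isPath_drop' p hp i).reverse) _
  have hql : q.length = j - i := by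
    rw [hq, length_drop', Walk.length_reverse, length_drop']
    omega
  have := dist_eq_length' hT q hqp
  rw [hql, hx] at this
  rw [SimpleGraph.dist_comm]
  exact this

def A (γ : ℕ) : ℕ := ∑ i ∈ Finset.range (γ + 1), (if 2 * i ≤ γ then γ - 2 * i else 2 * i - γ)

lemma A_rec (γ : ℕ) : A (γ + 2) = A γ + 2 * (γ + 2) := by
  unfold A
  rw [show γ + 2 + 1 = (γ + 2) + 1 from rfl, Finset.sum_range_succ, Finset.sum_range_succ']
  have h : ∀ i, (if 2 * (i + 1) ≤ γ + 2 then γ + 2 - 2 * (i + 1) else 2 * (i + 1) - (γ + 2))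
      = (if 2 * i ≤ γ then γ - 2 * i else 2 * i - γ) := by
    intro i; split_ifs <;> omega
  simp only [h]
  split_ifs <;> omega

lemma A_even (m : ℕ) : A (2 * m) = 2 * (m * (m + 1)) := by
  induction m with
  | zero => simp [A]
  | succ m ih =>
    have : 2 * (m + 1) = 2 * m + 2 := by ring
    rw [this, A_rec, ih]
    ring

lemma A_odd (m : ℕ) : A (2 * m + 1) = 2 * ((m + 1) * (m + 1)) := by
  induction m with
  | zero => simp [A, Finset.sum_range_succ]
  | succ m ih =>
    have : 2 * (m + 1) + 1 = (2 * m + 1) + 2 := by ring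
    rw [this, A_rec, ih]
    ring

end MyAux
theorem stmt6 {V : Type*} [Fintype V] (T : SimpleGraph V) (hT : T.IsTree) (s : V)
    (γ : ℕ) (hγ : 1 ≤ γ) {a b : V} (p : T.Walk a b) (hp : p.IsPath)
    (hlen : p.length = γ) :
    (Even γ →
      (γ : ℝ) ^ 2 / 4 + (γ : ℝ) / 2 ≤ ((p.support.map (T.dist s)).sum : ℝ)) ∧
    (Odd γ →
      (γ : ℝ) ^ 2 / 4 + (γ : ℝ) / 2 + 1 / 4 ≤ ((p.support.map (T.dist s)).sum : ℝ)) ∧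
    (γ : ℝ) ^ 2 / 4 ≤ ((p.support.map (T.dist s)).sum : ℝ) := by
  have hsum : (p.support.map (T.dist s)).sum
      = ∑ i ∈ Finset.range (γ + 1), T.dist s (p.getVert i) := by
    rw [MyAux.support_eq', List.map_map, hlen]
    rfl
  have hkey : ∀ i ∈ Finset.range (γ + 1),
      (if 2 * i ≤ γ then γ - 2 * i else 2 * i - γ)
        ≤ T.dist s (p.getVert i) + T.dist s (p.getVert (γ - i)) := by
    intro i hi
    simp only [Finset.mem_range] at hi
    by_cases h2 : 2 * i ≤ γ
    · have hd : T.dist (p.getVert i) (p.getVert (γ - i)) = (γ - i) - i :=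
        MyAux.dist_getVert' hT p hp (by omega) (by omega)
      have tri := hT.isConnected.dist_triangle (u := p.getVert i) (v := s)
        (w := p.getVert (γ - i))
      rw [SimpleGraph.dist_comm (u := p.getVert i) (v := s)] at tri
      rw [if_pos h2]
      omega
    · have hd : T.dist (p.getVert (γ - i)) (p.getVert i) = i - (γ - i) :=
        MyAux.dist_getVert' hT p hp (by omega) (by omega)
      have tri := hT.isConnected.dist_triangle (u := p.getVert (γ - i)) (v := s)
        (w := p.getVert i)
      rw [SimpleGraph.dist_comm (u := p.getVert (γ - i)) (v := s)] at tri
      rw [if_neg h2]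
      omega
  have hrefl : ∑ i ∈ Finset.range (γ + 1), T.dist s (p.getVert (γ - i))
      = ∑ i ∈ Finset.range (γ + 1), T.dist s (p.getVert i) := by
    have := Finset.sum_range_reflect (fun i => T.dist s (p.getVert i)) (γ + 1)
    simpa using this
  have hA : MyAux.A γ ≤ 2 * ∑ i ∈ Finset.range (γ + 1), T.dist s (p.getVert i) := by
    calc MyAux.A γ ≤ ∑ i ∈ Finset.range (γ + 1),
          (T.dist s (p.getVert i) + T.dist s (p.getVert (γ - i))) :=
        Finset.sum_le_sum hkey
      _ = 2 * ∑ i ∈ Finset.range (γ + 1), T.dist s (p.getVert i) := by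
        rw [Finset.sum_add_distrib, hrefl, two_mul]
  rw [hsum]
  set S : ℕ := ∑ i ∈ Finset.range (γ + 1), T.dist s (p.getVert i) with hS
  have heven : ∀ m : ℕ, γ = 2 * m → m * (m + 1) ≤ S := by
    intro m hm
    have := hA
    rw [hm, MyAux.A_even] at this
    omega
  have hodd : ∀ m : ℕ, γ = 2 * m + 1 → (m + 1) * (m + 1) ≤ S := by
    intro m hm
    have := hA
    rw [hm, MyAux.A_odd] at this
    omega
  have hE : Even γ → (γ : ℝ) ^ 2 / 4 + (γ : ℝ) / 2 ≤ (S : ℝ) := by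
    intro hev
    obtain ⟨m, hm⟩ := hev
    have hm' : γ = 2 * m := by omega
    have h := heven m hm'
    have h' : (m : ℝ) * (m + 1) ≤ (S : ℝ) := by exact_mod_cast h
    subst hm'
    push_cast
    nlinarith [h']
  have hO : Odd γ → (γ : ℝ) ^ 2 / 4 + (γ : ℝ) / 2 + 1 / 4 ≤ (S : ℝ) := by
    intro hod
    obtain ⟨m, hm⟩ := hod
    have h := hodd m hm
    have h' : ((m : ℝ) + 1) * (m + 1) ≤ (S : ℝ) := by exact_mod_cast h
    subst hm
    push_cast
    nlinarith [h']
  refine ⟨hE, hO, ?_⟩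
  have hγ0 : (0 : ℝ) ≤ (γ : ℝ) := by positivity
  rcases Nat.even_or_odd γ with h | h
  · have := hE h; linarith
  · have := hO h; linarith
end

section
/- Let G be a finite connected undirected unweighted graph whose vertex set is partitioned into pairwise disjoint nonempty clusters C_1,…,C_k, each inducing a connected subgraph G[C_i], let s be a source vertex, and let γ = max_i diam(G[C_i]). Then every clustered spanning tree T of G rooted at s satisfies cost(T) ≥ γ²/4. -/
open SimpleGraph

/-- Distance is antitone in the graph. -/
lemma aux_dist_anti {W : Type*} {A B : SimpleGraph W} (h : A ≤ B) {u v : W}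
    (hr : A.Reachable u v) : B.dist u v ≤ A.dist u v := by
  obtain ⟨p, hp⟩ := hr.exists_walk_length_eq_dist
  calc B.dist u v ≤ (p.mapLe h).length := SimpleGraph.dist_le _
    _ = p.length := SimpleGraph.Walk.length_map _ _
    _ = A.dist u v := hp

/-- The `j`-th vertex of a walk is at distance at most `j` from the start. -/
lemma aux_dist_getVert_le {W : Type*} {A : SimpleGraph W} (hA : A.Connected) {u v : W}
    (w : A.Walk u v) : ∀ j, A.dist u (w.getVert j) ≤ j := by
  intro j
  induction j with
  | zero => simp [w.getVert_zero]
  | succ n ih =>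
    by_cases hn : n < w.length
    · have h1 : A.dist (w.getVert n) (w.getVert (n + 1)) ≤ 1 := by
        have := A.dist_le (w.adj_getVert_succ hn).toWalk
        simpa using this
      have h2 := hA.dist_triangle (u := u) (v := w.getVert n) (w := w.getVert (n + 1))
      omega
    · rw [w.getVert_of_length_le (by omega)]
      have h3 : A.dist u v ≤ w.length := A.dist_le w
      omega

/-- In a tree, the distance inside a connected induced subgraph is at most the
distance in the whole tree. -/
lemma aux_induce_dist_le {W : Type*} {A : SimpleGraph W} (hA : A.IsTree) {S : Set W}
    (hS : (A.induce S).Connected) (u v : S) :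
    (A.induce S).dist u v ≤ A.dist u.1 v.1 := by
  classical
  obtain ⟨w, hw1, hw2⟩ := hA.isConnected.exists_path_of_dist u.1 v.1
  obtain ⟨q⟩ := hS.preconnected u v
  have hq' : q.bypass.IsPath := q.bypass_isPath
  have hinj : Function.Injective ⇑(SimpleGraph.Embedding.induce (G := A) S).toHom :=
    Subtype.val_injective
  have hmap : (q.bypass.map (SimpleGraph.Embedding.induce (G := A) S).toHom).IsPath :=
    SimpleGraph.Walk.map_isPath_of_injective hinj hq'
  have huniq := hA.existsUnique_path u.1 v.1
  have heq : w = q.bypass.map (SimpleGraph.Embedding.induce (G := A) S).toHom :=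
    (huniq.unique hw1 hmap)
  calc (A.induce S).dist u v ≤ q.bypass.length := SimpleGraph.dist_le _
    _ = (q.bypass.map (SimpleGraph.Embedding.induce (G := A) S).toHom).length :=
        (SimpleGraph.Walk.length_map _ _).symm
    _ = w.length := by rw [heq]; rfl
    _ = A.dist u.1 v.1 := hw2

/-- Sum of `|L - 2 j|` over `j = 0, …, L` is at least `L² / 2`. -/
lemma aux_abs_sum_lb (L : ℕ) :
    (L : ℝ) ^ 2 / 2 ≤ ∑ j ∈ Finset.range (L + 1), |(L : ℝ) - 2 * (j : ℝ)| := by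
  induction L using Nat.strong_induction_on with
  | _ L ih =>
    match L with
    | 0 => norm_num
    | 1 =>
      rw [Finset.sum_range_succ, Finset.sum_range_succ, Finset.sum_range_zero]
      norm_num
    | (K + 2) =>
      have hK := ih K (by omega)
      rw [Finset.sum_range_succ, Finset.sum_range_succ']
      have hmid : ∀ j, |((K + 2 : ℕ) : ℝ) - 2 * ((j + 1 : ℕ) : ℝ)|
          = |(K : ℝ) - 2 * (j : ℝ)| := by
        intro j
        congr 1
        push_cast
        ring
      have hmid' : (∑ j ∈ Finset.range (K + 1), |((K + 2 : ℕ) : ℝ) - 2 * ((j + 1 : ℕ) : ℝ)|)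
          = ∑ j ∈ Finset.range (K + 1), |(K : ℝ) - 2 * (j : ℝ)| :=
        Finset.sum_congr rfl fun j _ => hmid j
      have h0 : |((K + 2 : ℕ) : ℝ) - 2 * ((0 : ℕ) : ℝ)| = (K : ℝ) + 2 := by
        push_cast
        rw [mul_zero, sub_zero, abs_of_nonneg (by positivity)]
      have hlast : |((K + 2 : ℕ) : ℝ) - 2 * ((K + 2 : ℕ) : ℝ)| = (K : ℝ) + 2 := by
        push_cast
        rw [show ((K : ℝ) + 2) - 2 * ((K : ℝ) + 2) = -((K : ℝ) + 2) by ring, abs_neg,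
          abs_of_nonneg (by positivity)]
      rw [hmid', h0, hlast]
      push_cast
      nlinarith [hK]

/-- The key numerical estimate. -/
lemma aux_quarter_sq_le_sum (L : ℕ) (D : ℕ → ℝ) (h0 : ∀ j, 0 ≤ D j)
    (h : ∀ j ≤ L, (L : ℝ) ≤ 2 * (j : ℝ) + D j + D (L - j)) :
    (L : ℝ) ^ 2 / 4 ≤ ∑ j ∈ Finset.range (L + 1), D j := by
  have key : ∀ j ∈ Finset.range (L + 1), |(L : ℝ) - 2 * (j : ℝ)| ≤ D j + D (L - j) := by
    intro j hj
    rw [Finset.mem_range] at hj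
    have hjL : j ≤ L := by omega
    have h1 := h j hjL
    have h2 := h (L - j) (Nat.sub_le _ _)
    rw [Nat.sub_sub_self hjL] at h2
    have hcast : ((L - j : ℕ) : ℝ) = (L : ℝ) - (j : ℝ) := by
      rw [Nat.cast_sub hjL]
    rw [abs_le']
    constructor
    · linarith
    · rw [hcast] at h2; linarith
  have reflect : ∑ j ∈ Finset.range (L + 1), D (L - j) = ∑ j ∈ Finset.range (L + 1), D j := by
    have := Finset.sum_range_reflect D (L + 1)
    simpa using this
  have habs : ∑ j ∈ Finset.range (L + 1), |(L : ℝ) - 2 * (j : ℝ)|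
      ≤ 2 * ∑ j ∈ Finset.range (L + 1), D j := by
    calc ∑ j ∈ Finset.range (L + 1), |(L : ℝ) - 2 * (j : ℝ)|
        ≤ ∑ j ∈ Finset.range (L + 1), (D j + D (L - j)) := Finset.sum_le_sum key
      _ = 2 * ∑ j ∈ Finset.range (L + 1), D j := by
          rw [Finset.sum_add_distrib, reflect]; ring
  have hlb := aux_abs_sum_lb L
  linarith

theorem stmt7 {V : Type*} [Fintype V] (G : SimpleGraph V) (hG : G.Connected)
    {k : ℕ} (C : Fin k → Set V) (hpart : IsPartition C)
    (hconn : ∀ i, (G.induce (C i)).Connected)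
    (s : V) (γ : ℕ) (hγdef : γ = ⨆ i, clusterDiam G (C i))
    (T : SimpleGraph V) (hT : IsClusteredSpanningTree G C T) :
    (γ : ℝ) ^ 2 / 4 ≤ ((∑ v, T.dist s v : ℕ) : ℝ) := by
  classical
  by_cases hγ0 : γ = 0
  · subst hγ0
    simpa using Nat.cast_nonneg (α := ℝ) (∑ v, T.dist s v)
  -- find a cluster realizing γ
  have hk : k ≠ 0 := by
    rintro rfl
    apply hγ0
    rw [hγdef]
    simpa using ciSup_of_empty fun i : Fin 0 => clusterDiam G (C i)
  haveI : Nonempty (Fin k) := ⟨⟨0, Nat.pos_of_ne_zero hk⟩⟩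
  obtain ⟨i, hi⟩ := exists_eq_ciSup_of_finite (f := fun i => clusterDiam G (C i))
  have hγi : clusterDiam G (C i) = γ := by rw [hγdef]; exact hi
  -- the diameter is realized by two vertices u v of the cluster
  have hne : {d | ∃ u v : (C i), (G.induce (C i)).dist u v = d}.Nonempty := by
    obtain ⟨x, hx⟩ := hpart.1 i
    exact ⟨0, ⟨⟨x, hx⟩, ⟨x, hx⟩, SimpleGraph.dist_self⟩⟩
  have hbdd : BddAbove {d | ∃ u v : (C i), (G.induce (C i)).dist u v = d} := by
    have hset : {d | ∃ u v : (C i), (G.induce (C i)).dist u v = d}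
        = Set.range (fun p : (C i) × (C i) => (G.induce (C i)).dist p.1 p.2) := by
      ext d
      simp [Set.mem_range, Prod.exists]
    rw [hset]
    exact (Set.finite_range _).bddAbove
  have hmem : clusterDiam G (C i) ∈ {d | ∃ u v : (C i), (G.induce (C i)).dist u v = d} :=
    Nat.sSup_mem hne hbdd
  rw [hγi] at hmem
  obtain ⟨u, v, hd⟩ := hmem
  obtain ⟨hTle, hTree, hTind⟩ := hT
  have hTconn : T.Connected := hTree.isConnected
  -- γ ≤ T.dist u v
  have hind_le : T.induce (C i) ≤ G.induce (C i) := fun a b hab => hTle hab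
  have h1 : γ ≤ (T.induce (C i)).dist u v := by
    rw [← hd]
    exact aux_dist_anti hind_le ((hTind i).preconnected u v)
  have h2 : (T.induce (C i)).dist u v ≤ T.dist u.1 v.1 :=
    aux_induce_dist_le hTree (hTind i) u v
  set L := T.dist u.1 v.1 with hL
  have hγL : γ ≤ L := le_trans h1 h2
  obtain ⟨w, hwlen⟩ := hTconn.exists_walk_length_eq_dist u.1 v.1
  rw [← hL] at hwlen
  -- distance bounds along the walk
  have hforward : ∀ j, T.dist u.1 (w.getVert j) ≤ j := aux_dist_getVert_le hTconn w
  have hbackward : ∀ j ≤ L, T.dist (w.getVert j) v.1 ≤ L - j := by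
    intro j hj
    have h := aux_dist_getVert_le hTconn w.reverse (L - j)
    rw [SimpleGraph.Walk.getVert_reverse] at h
    have e : w.length - (L - j) = j := by omega
    rw [e] at h
    rwa [SimpleGraph.dist_comm]
  have hexact : ∀ j ≤ L, T.dist u.1 (w.getVert j) = j := by
    intro j hj
    refine le_antisymm (hforward j) ?_
    have htri := hTconn.dist_triangle (u := u.1) (v := w.getVert j) (w := v.1)
    have hb := hbackward j hj
    rw [← hL] at htri
    omega
  -- the pair inequality
  have hpair : ∀ j ≤ L, (L : ℝ) ≤ 2 * (j : ℝ) + ((T.dist s (w.getVert j) : ℕ) : ℝ)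
      + ((T.dist s (w.getVert (L - j)) : ℕ) : ℝ) := by
    intro j hj
    have t1 := hTconn.dist_triangle (u := u.1) (v := w.getVert j) (w := v.1)
    have t2 := hTconn.dist_triangle (u := w.getVert j) (v := s) (w := v.1)
    have t3 := hTconn.dist_triangle (u := s) (v := w.getVert (L - j)) (w := v.1)
    have hb := hbackward (L - j) (Nat.sub_le _ _)
    have e : L - (L - j) = j := by omega
    rw [e] at hb
    have hf := hforward j
    rw [← hL] at t1
    have hc1 : T.dist (w.getVert j) s = T.dist s (w.getVert j) := SimpleGraph.dist_comm
    have hnat : L ≤ 2 * j + T.dist s (w.getVert j) + T.dist s (w.getVert (L - j)) := by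
      omega
    exact_mod_cast hnat
  -- assemble
  have hsum := aux_quarter_sq_le_sum L (fun j => ((T.dist s (w.getVert j) : ℕ) : ℝ))
    (fun j => Nat.cast_nonneg _) hpair
  have hinj : ∀ a ∈ Finset.range (L + 1), ∀ b ∈ Finset.range (L + 1),
      w.getVert a = w.getVert b → a = b := by
    intro a ha b hb hab
    rw [Finset.mem_range] at ha hb
    calc a = T.dist u.1 (w.getVert a) := (hexact a (by omega)).symm
      _ = T.dist u.1 (w.getVert b) := by rw [hab]
      _ = b := hexact b (by omega)
  have hle : ∑ j ∈ Finset.range (L + 1), T.dist s (w.getVert j) ≤ ∑ x, T.dist s x := by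
    calc ∑ j ∈ Finset.range (L + 1), T.dist s (w.getVert j)
        = ∑ x ∈ (Finset.range (L + 1)).image w.getVert, T.dist s x :=
          (Finset.sum_image hinj).symm
      _ ≤ ∑ x, T.dist s x := Finset.sum_le_sum_of_subset (Finset.subset_univ _)
  have hγLr : (γ : ℝ) ≤ (L : ℝ) := by exact_mod_cast hγL
  calc (γ : ℝ) ^ 2 / 4 ≤ (L : ℝ) ^ 2 / 4 := by
        nlinarith [Nat.cast_nonneg (α := ℝ) γ]
    _ ≤ ∑ j ∈ Finset.range (L + 1), ((T.dist s (w.getVert j) : ℕ) : ℝ) := hsum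
    _ = ((∑ j ∈ Finset.range (L + 1), T.dist s (w.getVert j) : ℕ) : ℝ) := by push_cast; rfl
    _ ≤ ((∑ x, T.dist s x : ℕ) : ℝ) := by exact_mod_cast hle
end

section
/- Let φ be a 3-CNF formula with variables x_1,…,x_η and clauses c_1,…,c_μ, let M be a positive integer, and let the weighted graph G'_φ with its clustering and source s be the associated CluSPT instance. If φ is satisfiable, then the minimum of cost(T) over all clustered spanning trees T of G'_φ rooted at s equals η. -/
open SimpleGraph

inductive WVtx (η μ M : ℕ) where
  | s : WVtx η μ M
  | pos : Fin η → WVtx η μ M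
  | neg : Fin η → WVtx η μ M
  | cl : Fin μ → Fin 3 → WVtx η μ M
  | r : Fin μ → WVtx η μ M
  | pth : Fin μ → Fin M → WVtx η μ M
  deriving DecidableEq, Fintype

/-- Base adjacency relation for the CluSPT hardness graph `G'_φ`. -/
def wRel {η μ M : ℕ} (φ : Fin μ → Fin 3 → Fin η × Bool) :
    WVtx η μ M → WVtx η μ M → Prop
  | .s, .pos _ => True
  | .s, .neg _ => True
  | .pos i, .neg i' => i = i'
  | .r j, .cl j' _ => j = j'
  | .r j, .pth j' t => j = j' ∧ (t : ℕ) = 0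
  | .pth j t, .pth j' t' => j = j' ∧ (t' : ℕ) = (t : ℕ) + 1
  | .cl j k, .pos i => φ j k = (i, true)
  | .cl j k, .neg i => φ j k = (i, false)
  | _, _ => False

def wGraph {η μ M : ℕ} (φ : Fin μ → Fin 3 → Fin η × Bool) : SimpleGraph (WVtx η μ M) :=
  SimpleGraph.fromRel (wRel φ)

-- Edge weights: every edge has weight `0` except the edges `(v_i, v̄_i)`,
-- which have weight `1`.
open Classical in
noncomputable def wWt (η μ M : ℕ) : Sym2 (WVtx η μ M) → ℝ :=
  fun e => if ∃ i : Fin η, e = s(WVtx.pos i, WVtx.neg i) then 1 else 0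

def wClusters (η μ M : ℕ) : Set (Set (WVtx η μ M)) :=
  {{WVtx.s}} ∪ {S | ∃ i, S = {WVtx.pos i, WVtx.neg i}} ∪
    {S | ∃ j, S = {x | (∃ k, x = WVtx.cl j k) ∨ x = WVtx.r j ∨ ∃ t, x = WVtx.pth j t}}

/-- The weighted distance between `u` and `v` in `T` with edge weights `w`:
the least total weight of a walk from `u` to `v` (for a tree with nonnegative
weights, this is the total weight of the unique `u`–`v` path). -/
noncomputable def wdist {V : Type*} (T : SimpleGraph V) (w : Sym2 V → ℝ) (u v : V) : ℝ :=
  sInf {x | ∃ p : T.Walk u v, x = (p.edges.map w).sum}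


lemma exists_cons_of_closed {V : Type*} {G : SimpleGraph V} {u : V} (c : G.Walk u u)
    (h : c ≠ SimpleGraph.Walk.nil) :
    ∃ (y : V) (hadj : G.Adj u y) (q : G.Walk y u), c = SimpleGraph.Walk.cons hadj q := by
  cases c with
  | nil => exact absurd rfl h
  | cons ha qq => exact ⟨_, ha, qq, rfl⟩

lemma isTree_of_parent {V : Type*} [DecidableEq V] (T : SimpleGraph V) (s : V) (p : V → V)
    (d : V → ℕ)
    (hadj : ∀ u v, T.Adj u v ↔ (v ≠ s ∧ u = p v) ∨ (u ≠ s ∧ v = p u))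
    (hd : ∀ v, v ≠ s → d v = d (p v) + 1) : T.IsTree := by
  have hreach : ∀ (n : ℕ) (v : V), d v ≤ n → T.Reachable s v := by
    intro n
    induction n with
    | zero =>
      intro v hv
      by_cases hvs : v = s
      · subst hvs; exact Reachable.refl v
      · have := hd v hvs; omega
    | succ n ih =>
      intro v hv
      by_cases hvs : v = s
      · subst hvs; exact Reachable.refl v
      · have hpv : T.Adj (p v) v := (hadj _ _).mpr (Or.inl ⟨hvs, rfl⟩)
        have := hd v hvs
        exact (ih (p v) (by omega)).trans hpv.reachable
  haveI : Nonempty V := ⟨s⟩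
  constructor
  · exact ⟨fun u v => ((hreach _ u le_rfl).symm.trans (hreach _ v le_rfl))⟩
  · intro v c hc
    obtain ⟨x, hxarg⟩ : ∃ x, x ∈ c.support.argmax d := by
      cases h : c.support.argmax d with
      | none => exact absurd (List.argmax_eq_none.mp h) c.support_ne_nil
      | some x => exact ⟨x, by simp [h, Option.mem_def]⟩
    have hx : x ∈ c.support := List.argmax_mem hxarg
    have hmax : ∀ y ∈ c.support, d y ≤ d x := fun y hy => List.le_of_mem_argmax hy hxarg
    have hc' := hc.rotate hx
    have hsub : ∀ y ∈ (c.rotate x hx).support, y ∈ c.support := by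
      intro y hy
      rcases (SimpleGraph.Walk.mem_support_iff _).mp hy with rfl | hy2
      · exact hx
      · exact (SimpleGraph.Walk.mem_support_iff _).mpr
          (Or.inr (((SimpleGraph.Walk.support_rotate c x hx).mem_iff).mp hy2))
    obtain ⟨y, hxy, q, hEy⟩ := exists_cons_of_closed (c.rotate x hx) hc'.ne_nil
    have hrevne : (c.rotate x hx).reverse ≠ SimpleGraph.Walk.nil := by
      intro h
      apply hc'.ne_nil
      rw [← SimpleGraph.Walk.reverse_reverse (c.rotate x hx), h, SimpleGraph.Walk.reverse_nil]
    obtain ⟨z, hxz, q2, hEz⟩ := exists_cons_of_closed (c.rotate x hx).reverse hrevne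
    have hy_mem : y ∈ (c.rotate x hx).support := by
      rw [hEy, SimpleGraph.Walk.support_cons]
      exact List.mem_cons_of_mem _ q.start_mem_support
    have hz_mem : z ∈ (c.rotate x hx).support := by
      have : z ∈ (c.rotate x hx).reverse.support := by
        rw [hEz, SimpleGraph.Walk.support_cons]
        exact List.mem_cons_of_mem _ q2.start_mem_support
      rwa [SimpleGraph.Walk.support_reverse, List.mem_reverse] at this
    have hy_le : d y ≤ d x := hmax y (hsub y hy_mem)
    have hz_le : d z ≤ d x := hmax z (hsub z hz_mem)
    have hy_par : y = p x := by
      rcases (hadj x y).mp hxy with ⟨hys, hxp⟩ | ⟨_, h2⟩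
      · exfalso; have := hd y hys; rw [← hxp] at this; omega
      · exact h2
    have hz_par : z = p x := by
      rcases (hadj x z).mp hxz with ⟨hzs, hxp⟩ | ⟨_, h2⟩
      · exfalso; have := hd z hzs; rw [← hxp] at this; omega
      · exact h2
    have hyz : y = z := hy_par.trans hz_par.symm
    have hlist : s(x, y) :: q.edges = q2.reverse.edges ++ [s(z, x)] := by
      have h1 : (c.rotate x hx) = q2.reverse.append (SimpleGraph.Walk.cons hxz.symm SimpleGraph.Walk.nil) := by
        rw [← SimpleGraph.Walk.reverse_reverse (c.rotate x hx), hEz, SimpleGraph.Walk.reverse_cons]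
      rw [hEy] at h1
      have := congrArg SimpleGraph.Walk.edges h1
      simpa [SimpleGraph.Walk.edges_append] using this
    have hqne : q.edges ≠ [] := by
      intro h
      have h3 := hc'.three_le_length
      rw [hEy, SimpleGraph.Walk.length_cons] at h3
      have h4 : q.edges.length = q.length := SimpleGraph.Walk.length_edges q
      rw [h] at h4
      simp at h4
      omega
    have hmem : s(x, y) ∈ q.edges := by
      have h5 : (s(x, y) :: q.edges).getLast? = some s(z, x) := by
        rw [hlist]; simp
      obtain ⟨hne2, heq⟩ := List.mem_getLast?_eq_getLast (x := s(z, x))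
        (l := s(x, y) :: q.edges) (by rw [Option.mem_def, h5])
      rw [List.getLast_cons hqne] at heq
      have := List.getLast_mem hqne
      rw [← heq] at this
      have hswap : s(z, x) = s(x, y) := by rw [hyz]; exact Sym2.eq_swap
      rwa [hswap] at this
    have hnodup := hc'.edges_nodup
    rw [hEy, SimpleGraph.Walk.edges_cons] at hnodup
    exact (List.nodup_cons.mp hnodup).1 hmem
section WD
variable {V : Type*} {T : SimpleGraph V} {w : Sym2 V → ℝ}

lemma walk_sum_nonneg (hw : ∀ e, 0 ≤ w e) {u v : V} (p : T.Walk u v) :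
    0 ≤ (p.edges.map w).sum := by
  apply List.sum_nonneg
  intro a ha
  obtain ⟨e, _, rfl⟩ := List.mem_map.mp ha
  exact hw e

lemma wdist_nonneg (hw : ∀ e, 0 ≤ w e) (u v : V) : 0 ≤ wdist T w u v :=
  Real.sInf_nonneg (by rintro x ⟨p, rfl⟩; exact walk_sum_nonneg hw p)

lemma wdist_bddBelow (hw : ∀ e, 0 ≤ w e) (u v : V) :
    BddBelow {x | ∃ p : T.Walk u v, x = (p.edges.map w).sum} :=
  ⟨0, by rintro x ⟨p, rfl⟩; exact walk_sum_nonneg hw p⟩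

lemma wdist_le_walk (hw : ∀ e, 0 ≤ w e) {u v : V} (p : T.Walk u v) :
    wdist T w u v ≤ (p.edges.map w).sum :=
  csInf_le (wdist_bddBelow hw u v) ⟨p, rfl⟩

lemma wdist_le_parent (hw : ∀ e, 0 ≤ w e) {s u v : V} (hr : T.Reachable s u)
    (hadj : T.Adj u v) : wdist T w s v ≤ wdist T w s u + w s(u, v) := by
  obtain ⟨p0⟩ := hr
  have hA : {x | ∃ p : T.Walk s u, x = (p.edges.map w).sum}.Nonempty := ⟨_, p0, rfl⟩
  have key : ∀ x ∈ {x | ∃ p : T.Walk s u, x = (p.edges.map w).sum},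
      wdist T w s v - w s(u, v) ≤ x := by
    rintro x ⟨p, rfl⟩
    have h1 := wdist_le_walk (T := T) hw (p.concat hadj)
    rw [SimpleGraph.Walk.edges_concat] at h1
    simp only [List.concat_eq_append, List.map_append, List.sum_append, List.map_cons,
      List.map_nil, List.sum_cons, List.sum_nil] at h1
    linarith
  have h2 := le_csInf hA key
  have : wdist T w s v - w s(u, v) ≤ wdist T w s u := h2
  linarith

lemma wdist_nil_le (hw : ∀ e, 0 ≤ w e) (s : V) : wdist T w s s ≤ 0 := by
  have := wdist_le_walk (T := T) hw (SimpleGraph.Walk.nil (u := s))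
  simpa using this

lemma one_le_wdist_pair (hw : ∀ e, 0 ≤ w e) (hT : T.IsTree) {u v : V} (hadj : T.Adj u v)
    (hwe : 1 ≤ w s(u, v)) (s : V) : 1 ≤ wdist T w s u + wdist T w s v := by
  have hbridge : T.IsBridge s(u, v) :=
    SimpleGraph.isAcyclic_iff_forall_adj_isBridge.mp hT.IsAcyclic hadj
  have hnr : ¬(T \ SimpleGraph.fromEdgeSet {s(u, v)}).Reachable u v := SimpleGraph.isBridge_iff.mp hbridge
  have key : ∀ x ∈ {x | ∃ p : T.Walk s u, x = (p.edges.map w).sum},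
      ∀ y ∈ {x | ∃ p : T.Walk s v, x = (p.edges.map w).sum}, 1 ≤ x + y := by
    rintro x ⟨p, rfl⟩ y ⟨q, rfl⟩
    have hmem : s(u, v) ∈ p.edges ∨ s(u, v) ∈ q.edges := by
      by_contra h
      push_neg at h
      apply hnr
      apply SimpleGraph.reachable_delete_edges_iff_exists_walk.mpr
      refine ⟨p.reverse.append q, ?_⟩
      rw [SimpleGraph.Walk.edges_append, SimpleGraph.Walk.edges_reverse]
      simp only [List.mem_append, List.mem_reverse]
      tauto
    rcases hmem with hmem | hmem
    · have h1 : w s(u, v) ≤ (p.edges.map w).sum :=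
        List.single_le_sum (by rintro a ha; obtain ⟨e, _, rfl⟩ := List.mem_map.mp ha; exact hw e)
          _ (List.mem_map_of_mem hmem)
      have h2 := walk_sum_nonneg hw q
      linarith
    · have h1 : w s(u, v) ≤ (q.edges.map w).sum :=
        List.single_le_sum (by rintro a ha; obtain ⟨e, _, rfl⟩ := List.mem_map.mp ha; exact hw e)
          _ (List.mem_map_of_mem hmem)
      have h2 := walk_sum_nonneg hw p
      linarith
  have hAne : {x | ∃ p : T.Walk s u, x = (p.edges.map w).sum}.Nonempty :=
    ⟨_, (hT.isConnected.preconnected s u).some, rfl⟩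
  have hBne : {x | ∃ p : T.Walk s v, x = (p.edges.map w).sum}.Nonempty :=
    ⟨_, (hT.isConnected.preconnected s v).some, rfl⟩
  have h1 : ∀ y ∈ {x | ∃ p : T.Walk s v, x = (p.edges.map w).sum},
      1 - y ≤ wdist T w s u := by
    intro y hy
    exact le_csInf hAne (fun x hx => by linarith [key x hx y hy])
  have h2 : 1 - wdist T w s u ≤ wdist T w s v :=
    le_csInf hBne (fun y hy => by linarith [h1 y hy])
  linarith
end WD
section Constr
variable {η μ M : ℕ}

def tpar (φ : Fin μ → Fin 3 → Fin η × Bool) (a : Fin η → Bool) (k : Fin μ → Fin 3) :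
    WVtx η μ M → WVtx η μ M
  | .s => .s
  | .pos i => if a i then .s else .neg i
  | .neg i => if a i then .pos i else .s
  | .cl j k' => if k' = k j then
      (if (φ j k').2 then .pos (φ j k').1 else .neg (φ j k').1) else .r j
  | .r j => .cl j (k j)
  | .pth j t => if (t : ℕ) = 0 then .r j
      else .pth j ⟨(t : ℕ) - 1, lt_of_le_of_lt (Nat.sub_le _ _) t.isLt⟩

def tdep (a : Fin η → Bool) (k : Fin μ → Fin 3) : WVtx η μ M → ℕ
  | .s => 0
  | .pos i => if a i then 1 else 2
  | .neg i => if a i then 2 else 1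
  | .cl j k' => if k' = k j then 2 else 4
  | .r _ => 3
  | .pth _ t => 4 + (t : ℕ)

lemma tdep_par {φ : Fin μ → Fin 3 → Fin η × Bool} {a : Fin η → Bool} {k : Fin μ → Fin 3}
    (hk : ∀ j, a (φ j (k j)).1 = (φ j (k j)).2) :
    ∀ v : WVtx η μ M, v ≠ .s → tdep a k v = tdep a k (tpar φ a k v) + 1 := by
  intro v hv
  match v with
  | .s => exact absurd rfl hv
  | .pos i => by_cases h : a i <;> simp [tpar, tdep, h]
  | .neg i => by_cases h : a i <;> simp [tpar, tdep, h]
  | .cl j k' =>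
    by_cases h : k' = k j
    · subst h
      have hkj := hk j
      cases hb : (φ j (k j)).2 <;> rw [hb] at hkj <;> simp [tpar, tdep, hb, hkj]
    · simp [tpar, tdep, h]
  | .r j => simp [tpar, tdep]
  | .pth j t =>
    by_cases h : (t : ℕ) = 0
    · simp [tpar, tdep, h]
    · simp [tpar, tdep, h]
      omega

def tT (φ : Fin μ → Fin 3 → Fin η × Bool) (a : Fin η → Bool) (k : Fin μ → Fin 3) :
    SimpleGraph (WVtx η μ M) where
  Adj u v := u ≠ v ∧ ((v ≠ .s ∧ u = tpar φ a k v) ∨ (u ≠ .s ∧ v = tpar φ a k u))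
  symm := ⟨by rintro u v ⟨h1, h2⟩; exact ⟨h1.symm, h2.symm⟩⟩
  loopless := ⟨fun v h => h.1 rfl⟩

lemma tT_adj {φ : Fin μ → Fin 3 → Fin η × Bool} {a : Fin η → Bool} {k : Fin μ → Fin 3}
    (hk : ∀ j, a (φ j (k j)).1 = (φ j (k j)).2) (u v : WVtx η μ M) :
    (tT φ a k).Adj u v ↔ (v ≠ .s ∧ u = tpar φ a k v) ∨ (u ≠ .s ∧ v = tpar φ a k u) := by
  constructor
  · exact And.right
  · intro h
    refine ⟨?_, h⟩
    rintro rfl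
    rcases h with ⟨hv, he⟩ | ⟨hv, he⟩ <;>
      · have h2 := tdep_par hk _ hv
        rw [← he] at h2
        omega

lemma wRel_par {φ : Fin μ → Fin 3 → Fin η × Bool} {a : Fin η → Bool} {k : Fin μ → Fin 3} :
    ∀ v : WVtx η μ M, v ≠ .s →
      wRel φ (tpar φ a k v) v ∨ wRel φ v (tpar φ a k v) := by
  intro v hv
  match v with
  | .s => exact absurd rfl hv
  | .pos i => by_cases h : a i <;> simp [tpar, wRel, h]
  | .neg i => by_cases h : a i <;> simp [tpar, wRel, h]
  | .cl j k' =>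
    by_cases h : k' = k j
    · subst h
      cases hb : (φ j (k j)).2 <;> simp [tpar, wRel, hb] <;>
        exact Prod.ext rfl hb
    · simp [tpar, wRel, h]
  | .r j => simp [tpar, wRel]
  | .pth j t =>
    by_cases h : (t : ℕ) = 0
    · simp [tpar, wRel, h]
    · simp [tpar, wRel, h]
      omega
end Constr

section Constr2
variable {η μ M : ℕ}

lemma tT_le {φ : Fin μ → Fin 3 → Fin η × Bool} {a : Fin η → Bool} {k : Fin μ → Fin 3} :
    tT (M := M) φ a k ≤ wGraph φ := by
  rintro u v ⟨hne, h⟩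
  rw [wGraph, SimpleGraph.fromRel_adj]
  refine ⟨hne, ?_⟩
  rcases h with ⟨hv, he⟩ | ⟨hu, he⟩
  · subst he; exact wRel_par v hv
  · subst he; exact (wRel_par u hu).symm

end Constr2

section Sums
variable {η μ M : ℕ}

abbrev WIdx (η μ M : ℕ) :=
  Unit ⊕ Fin η ⊕ Fin η ⊕ (Fin μ × Fin 3) ⊕ Fin μ ⊕ (Fin μ × Fin M)

def wUnpack : WIdx η μ M → WVtx η μ M
  | .inl _ => .s
  | .inr (.inl i) => .pos i
  | .inr (.inr (.inl i)) => .neg i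
  | .inr (.inr (.inr (.inl p))) => .cl p.1 p.2
  | .inr (.inr (.inr (.inr (.inl j)))) => .r j
  | .inr (.inr (.inr (.inr (.inr p)))) => .pth p.1 p.2

def wPack : WVtx η μ M → WIdx η μ M
  | .s => .inl ()
  | .pos i => .inr (.inl i)
  | .neg i => .inr (.inr (.inl i))
  | .cl j kk => .inr (.inr (.inr (.inl (j, kk))))
  | .r j => .inr (.inr (.inr (.inr (.inl j))))
  | .pth j t => .inr (.inr (.inr (.inr (.inr (j, t)))))

def wEquiv : WIdx η μ M ≃ WVtx η μ M where
  toFun := wUnpack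
  invFun := wPack
  left_inv := by rintro (x | x | x | ⟨j, kk⟩ | x | ⟨j, t⟩) <;> rfl
  right_inv := by intro v; cases v <;> rfl

lemma sum_wvtx (f : WVtx η μ M → ℝ) :
    ∑ v, f v = f .s + (∑ i, f (.pos i)) + (∑ i, f (.neg i)) +
      (∑ j, ∑ kk, f (.cl j kk)) + (∑ j, f (.r j)) + (∑ j, ∑ t, f (.pth j t)) := by
  rw [← Equiv.sum_comp (wEquiv (η := η) (μ := μ) (M := M)) f]
  simp [Fintype.sum_sum_type, Fintype.sum_prod_type, wEquiv, wUnpack]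
  ring

def ubf (a : Fin η → Bool) : WVtx η μ M → ℝ
  | .pos i => if a i then 0 else 1
  | .neg i => if a i then 1 else 0
  | _ => 0

lemma sum_ubf (a : Fin η → Bool) : ∑ v, ubf (μ := μ) (M := M) a v = (η : ℝ) := by
  rw [sum_wvtx]
  simp only [ubf]
  have h1 : ∀ i : Fin η, ((if a i = true then (0:ℝ) else 1) + (if a i = true then 1 else 0)) = 1 := by
    intro i; by_cases h : a i <;> simp [h]
  rw [show ((0 + ∑ x : Fin η, if a x = true then (0:ℝ) else 1) + ∑ x : Fin η, if a x = true then (1:ℝ) else 0) +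
          ∑ _x : Fin μ, ∑ _x : Fin 3, (0:ℝ) +
        ∑ _x : Fin μ, (0:ℝ) +
      ∑ _x : Fin μ, ∑ _x : Fin M, (0:ℝ)
    = ∑ i : Fin η, ((if a i = true then (0:ℝ) else 1) + (if a i = true then (1:ℝ) else 0)) by
      rw [Finset.sum_add_distrib]; simp]
  simp [h1]

lemma wWt_nonneg : ∀ e, 0 ≤ wWt η μ M e := by
  intro e
  simp only [wWt]
  split <;> norm_num

lemma wWt_pair (i : Fin η) : wWt η μ M s(WVtx.pos i, WVtx.neg i) = 1 := by
  simp only [wWt]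
  rw [if_pos ⟨i, rfl⟩]

lemma wWt_eq_zero {u v : WVtx η μ M}
    (h : ∀ i : Fin η, ¬(u = .pos i ∧ v = .neg i) ∧ ¬(u = .neg i ∧ v = .pos i)) :
    wWt η μ M s(u, v) = 0 := by
  simp only [wWt]
  rw [if_neg]
  rintro ⟨i, hi⟩
  rw [Sym2.eq_iff] at hi
  rcases hi with ⟨h1, h2⟩ | ⟨h1, h2⟩
  · exact (h i).1 ⟨h1, h2⟩
  · exact (h i).2 ⟨h1, h2⟩
end Sums

section Clusters
variable {η μ M : ℕ}

lemma induce_singleton_connected {V : Type*} (G : SimpleGraph V) (x : V) :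
    (G.induce {x}).Connected := by
  haveI : Nonempty ({x} : Set V) := ⟨⟨x, rfl⟩⟩
  refine ⟨fun u v => ?_⟩
  have hu := u.2; have hv := v.2
  simp only [Set.mem_singleton_iff] at hu hv
  have : u = v := Subtype.ext (hu.trans hv.symm)
  rw [this]

lemma induce_pair_connected {V : Type*} (G : SimpleGraph V) {x y : V} (hadj : G.Adj x y) :
    (G.induce {x, y}).Connected := by
  have hxm : x ∈ ({x, y} : Set V) := Or.inl rfl
  haveI : Nonempty ({x, y} : Set V) := ⟨⟨x, hxm⟩⟩
  refine ⟨fun u v => ?_⟩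
  have key : ∀ z : ({x, y} : Set V), (G.induce {x, y}).Reachable ⟨x, hxm⟩ z := by
    rintro ⟨z, hz⟩
    simp only [Set.mem_insert_iff, Set.mem_singleton_iff] at hz
    rcases hz with rfl | rfl
    · rfl
    · exact SimpleGraph.Adj.reachable (by exact hadj)
  exact (key u).symm.trans (key v)

lemma adj_of_connected_pair {V : Type*} {G : SimpleGraph V} {x y : V} (hxy : x ≠ y)
    (h : (G.induce {x, y}).Connected) : G.Adj x y := by
  have hxm : x ∈ ({x, y} : Set V) := Or.inl rfl
  have hym : y ∈ ({x, y} : Set V) := Or.inr rfl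
  obtain ⟨p⟩ := h.preconnected ⟨x, hxm⟩ ⟨y, hym⟩
  have aux : ∀ (u v : ({x, y} : Set V)) (p : (G.induce {x, y}).Walk u v),
      u ≠ v → G.Adj u v := by
    intro u v p
    induction p with
    | nil => intro hcon; exact absurd rfl hcon
    | @cons u' w' v' hA q ih =>
      intro huv
      by_cases hwv : w' = v'
      · subst hwv; exact hA
      · exfalso
        have e1 : u' ≠ w' := fun hh => (SimpleGraph.Adj.ne hA) hh
        have hu := u'.2; have hv := v'.2; have hw := w'.2
        simp only [Set.mem_insert_iff, Set.mem_singleton_iff] at hu hv hw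
        have e1' : u'.1 ≠ w'.1 := fun hh => e1 (Subtype.ext hh)
        have e2' : w'.1 ≠ v'.1 := fun hh => hwv (Subtype.ext hh)
        have e3' : u'.1 ≠ v'.1 := fun hh => huv (Subtype.ext hh)
        rcases hu with hu | hu <;> rcases hv with hv | hv <;> rcases hw with hw | hw <;>
          simp_all
  exact aux _ _ p (fun hh => hxy (by simpa using congrArg Subtype.val hh))

def Cset (η M : ℕ) (j : Fin μ) : Set (WVtx η μ M) :=
  {x | (∃ kk, x = WVtx.cl j kk) ∨ x = WVtx.r j ∨ ∃ t, x = WVtx.pth j t}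

lemma clause_conn (φ : Fin μ → Fin 3 → Fin η × Bool) (a : Fin η → Bool) (k : Fin μ → Fin 3)
    (j : Fin μ) : ((tT (M := M) φ a k).induce (Cset η M j)).Connected := by
  have hroot : (WVtx.r j : WVtx η μ M) ∈ Cset η M j := Or.inr (Or.inl rfl)
  have hadj_r_cl : ∀ kk, (tT (M := M) φ a k).Adj (.r j) (.cl j kk) := by
    intro kk
    refine ⟨by simp, ?_⟩
    by_cases h : kk = k j
    · exact Or.inr ⟨by simp, by simp [tpar, h]⟩
    · exact Or.inl ⟨by simp, by simp [tpar, h]⟩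
  have hadj_r_pth : ∀ (h0 : 0 < M), (tT (M := M) φ a k).Adj (.r j) (.pth j ⟨0, h0⟩) := by
    intro h0
    exact ⟨by simp, Or.inl ⟨by simp, by simp [tpar]⟩⟩
  have hadj_pth : ∀ (n : ℕ) (h1 : n + 1 < M),
      (tT (M := M) φ a k).Adj (.pth j ⟨n, Nat.lt_of_succ_lt h1⟩) (.pth j ⟨n + 1, h1⟩) := by
    intro n h1
    refine ⟨by simp, Or.inl ⟨by simp, ?_⟩⟩
    simp [tpar]
  have reach : ∀ (x : WVtx η μ M) (hx : x ∈ Cset η M j),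
      ((tT (M := M) φ a k).induce (Cset η M j)).Reachable ⟨.r j, hroot⟩ ⟨x, hx⟩ := by
    intro x hx
    rcases hx with ⟨kk, rfl⟩ | rfl | ⟨t, rfl⟩
    · exact SimpleGraph.Adj.reachable (by exact hadj_r_cl kk)
    · rfl
    · have key : ∀ (n : ℕ) (hn : n < M),
          ((tT (M := M) φ a k).induce (Cset η M j)).Reachable ⟨.r j, hroot⟩
            ⟨.pth j ⟨n, hn⟩, Or.inr (Or.inr ⟨_, rfl⟩)⟩ := by
        intro n
        induction n with
        | zero => intro hn; exact SimpleGraph.Adj.reachable (by exact hadj_r_pth hn)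
        | succ n ih =>
          intro hn
          exact (ih (Nat.lt_of_succ_lt hn)).trans
            (SimpleGraph.Adj.reachable (by exact hadj_pth n hn))
      have := key t.1 t.2
      have heq : (WVtx.pth j ⟨t.1, t.2⟩ : WVtx η μ M) = WVtx.pth j t := by simp
      convert this using 2 <;> simp [heq]
  haveI : Nonempty (Cset η M j) := ⟨⟨.r j, hroot⟩⟩
  refine ⟨fun u v => ?_⟩
  exact (reach u u.2).symm.trans (reach v v.2)
end Clusters

theorem stmt12 (η μ M : ℕ) (hM : 0 < M) (φ : Fin μ → Fin 3 → Fin η × Bool)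
    (hsat : ∃ a : Fin η → Bool, ∀ j, ∃ k, a (φ j k).1 = (φ j k).2) :
    IsLeast {c : ℝ | ∃ T : SimpleGraph (WVtx η μ M),
        IsCST (wGraph φ) (wClusters η μ M) T ∧
        c = ∑ v, wdist T (wWt η μ M) WVtx.s v}
      (η : ℝ) := by
  obtain ⟨a, ha⟩ := hsat
  choose k hk using ha
  -- common lower bound for any clustered spanning tree
  have lb : ∀ T : SimpleGraph (WVtx η μ M), IsCST (wGraph φ) (wClusters η μ M) T →
      (η : ℝ) ≤ ∑ v, wdist T (wWt η μ M) WVtx.s v := by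
    intro T hcst
    obtain ⟨hle, htree, hcl⟩ := hcst
    have hpair : ∀ i : Fin η, 1 ≤ wdist T (wWt η μ M) WVtx.s (.pos i) +
        wdist T (wWt η μ M) WVtx.s (.neg i) := by
      intro i
      have hmem : ({WVtx.pos i, WVtx.neg i} : Set (WVtx η μ M)) ∈ wClusters η μ M :=
        Or.inl (Or.inr ⟨i, rfl⟩)
      have hconn := hcl _ hmem
      have hadj : T.Adj (.pos i) (.neg i) :=
        adj_of_connected_pair (by simp) hconn
      exact one_le_wdist_pair wWt_nonneg htree hadj (le_of_eq (wWt_pair i).symm) _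
    have h0 : ∀ v, 0 ≤ wdist T (wWt η μ M) WVtx.s v := wdist_nonneg wWt_nonneg WVtx.s
    rw [sum_wvtx]
    have hsum : (η : ℝ) ≤ (∑ i, wdist T (wWt η μ M) WVtx.s (.pos i)) +
        (∑ i, wdist T (wWt η μ M) WVtx.s (.neg i)) := by
      rw [← Finset.sum_add_distrib]
      calc (η : ℝ) = ∑ _i : Fin η, (1 : ℝ) := by simp
        _ ≤ _ := Finset.sum_le_sum (fun i _ => hpair i)
    have n1 : 0 ≤ ∑ j, ∑ kk, wdist T (wWt η μ M) WVtx.s (.cl j kk) :=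
      Finset.sum_nonneg (fun j _ => Finset.sum_nonneg (fun kk _ => h0 _))
    have n2 : 0 ≤ ∑ j, wdist T (wWt η μ M) WVtx.s (.r j) :=
      Finset.sum_nonneg (fun j _ => h0 _)
    have n3 : 0 ≤ ∑ j, ∑ t, wdist T (wWt η μ M) WVtx.s (.pth j t) :=
      Finset.sum_nonneg (fun j _ => Finset.sum_nonneg (fun t _ => h0 _))
    have n4 := h0 WVtx.s
    linarith
  constructor
  · -- membership: the constructed tree
    have htree : (tT (M := M) φ a k).IsTree :=
      isTree_of_parent _ WVtx.s (tpar φ a k) (tdep a k) (tT_adj hk) (tdep_par hk)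
    have hcst : IsCST (wGraph φ) (wClusters η μ M) (tT (M := M) φ a k) := by
      refine ⟨tT_le, htree, ?_⟩
      intro C hC
      rcases hC with (hC | ⟨i, rfl⟩) | ⟨j, rfl⟩
      · rw [Set.mem_singleton_iff] at hC
        subst hC
        exact induce_singleton_connected _ _
      · refine induce_pair_connected _ ?_
        refine ⟨by simp, ?_⟩
        by_cases h : a i
        · exact Or.inl ⟨by simp, by simp [tpar, h]⟩
        · exact Or.inr ⟨by simp, by simp [tpar, h]⟩
      · exact clause_conn φ a k j
    refine ⟨tT (M := M) φ a k, hcst, ?_⟩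
    have hub : ∀ v, wdist (tT (M := M) φ a k) (wWt η μ M) WVtx.s v ≤ ubf a v := by
      have main : ∀ (n : ℕ) (v : WVtx η μ M), tdep a k v ≤ n →
          wdist (tT (M := M) φ a k) (wWt η μ M) WVtx.s v ≤ ubf a v := by
        intro n
        induction n with
        | zero =>
          intro v hv
          by_cases hvs : v = WVtx.s
          · subst hvs
            simpa [ubf] using wdist_nil_le (T := tT (M := M) φ a k) wWt_nonneg WVtx.s
          · have := tdep_par hk v hvs; omega
        | succ n ih =>
          intro v hv
          by_cases hvs : v = WVtx.s
          · subst hvs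
            simpa [ubf] using wdist_nil_le (T := tT (M := M) φ a k) wWt_nonneg WVtx.s
          · have hadj : (tT (M := M) φ a k).Adj (tpar φ a k v) v :=
              (tT_adj hk _ _).mpr (Or.inl ⟨hvs, rfl⟩)
            have hr : (tT (M := M) φ a k).Reachable WVtx.s (tpar φ a k v) :=
              htree.isConnected.preconnected _ _
            have h1 := wdist_le_parent wWt_nonneg hr hadj
            have hdp := tdep_par hk v hvs
            have h2 := ih (tpar φ a k v) (by omega)
            have h3 : ubf a (tpar φ a k v) + wWt η μ M s(tpar φ a k v, v) ≤ ubf a v := by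
              match v with
              | .s => exact absurd rfl hvs
              | .pos i =>
                cases hb : a i
                · have ht : tpar (M := M) φ a k (WVtx.pos i) = WVtx.neg i := by simp [tpar, hb]
                  rw [ht, show s((WVtx.neg i : WVtx η μ M), WVtx.pos i) =
                      s(WVtx.pos i, WVtx.neg i) from Sym2.eq_swap, wWt_pair]
                  simp [ubf, hb]
                · have ht : tpar (M := M) φ a k (WVtx.pos i) = WVtx.s := by simp [tpar, hb]
                  rw [ht, wWt_eq_zero (by intro i'; constructor <;> rintro ⟨ha1, ha2⟩ <;> simp_all)]
                  simp [ubf, hb]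
              | .neg i =>
                cases hb : a i
                · have ht : tpar (M := M) φ a k (WVtx.neg i) = WVtx.s := by simp [tpar, hb]
                  rw [ht, wWt_eq_zero (by intro i'; constructor <;> rintro ⟨ha1, ha2⟩ <;> simp_all)]
                  simp [ubf, hb]
                · have ht : tpar (M := M) φ a k (WVtx.neg i) = WVtx.pos i := by simp [tpar, hb]
                  rw [ht, wWt_pair]
                  simp [ubf, hb]
              | .cl j k' =>
                by_cases h : k' = k j
                · subst h
                  have hkj := hk j
                  cases hb : (φ j (k j)).2 <;> rw [hb] at hkj
                  · have ht : tpar (M := M) φ a k (WVtx.cl j (k j)) = WVtx.neg (φ j (k j)).1 := by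
                      simp [tpar, hb]
                    rw [ht, wWt_eq_zero (by intro i'; constructor <;> rintro ⟨ha1, ha2⟩ <;> simp_all)]
                    simp [ubf, hkj]
                  · have ht : tpar (M := M) φ a k (WVtx.cl j (k j)) = WVtx.pos (φ j (k j)).1 := by
                      simp [tpar, hb]
                    rw [ht, wWt_eq_zero (by intro i'; constructor <;> rintro ⟨ha1, ha2⟩ <;> simp_all)]
                    simp [ubf, hkj]
                · have ht : tpar (M := M) φ a k (WVtx.cl j k') = WVtx.r j := by simp [tpar, h]
                  rw [ht, wWt_eq_zero (by intro i'; constructor <;> rintro ⟨ha1, ha2⟩ <;> simp_all)]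
                  simp [ubf]
              | .r j =>
                have ht : tpar (M := M) φ a k (WVtx.r j) = WVtx.cl j (k j) := by simp [tpar]
                rw [ht, wWt_eq_zero (by intro i'; constructor <;> rintro ⟨ha1, ha2⟩ <;> simp_all)]
                simp [ubf]
              | .pth j t =>
                by_cases h : (t : ℕ) = 0
                · have ht : tpar (M := M) φ a k (WVtx.pth j t) = WVtx.r j := by simp [tpar, h]
                  rw [ht, wWt_eq_zero (by intro i'; constructor <;> rintro ⟨ha1, ha2⟩ <;> simp_all)]
                  simp [ubf]
                · have ht : tpar (M := M) φ a k (WVtx.pth j t) =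
                      WVtx.pth j ⟨(t : ℕ) - 1, lt_of_le_of_lt (Nat.sub_le _ _) t.isLt⟩ := by
                    simp [tpar, h]
                  rw [ht, wWt_eq_zero (by intro i'; constructor <;> rintro ⟨ha1, ha2⟩ <;> simp_all)]
                  simp [ubf]
            linarith
      intro v
      exact main (tdep a k v) v le_rfl
    have hles : ∑ v, wdist (tT (M := M) φ a k) (wWt η μ M) WVtx.s v ≤ (η : ℝ) := by
      calc ∑ v, wdist (tT (M := M) φ a k) (wWt η μ M) WVtx.s v
          ≤ ∑ v, ubf (μ := μ) (M := M) a v := Finset.sum_le_sum (fun v _ => hub v)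
        _ = (η : ℝ) := sum_ubf a
    exact le_antisymm (lb _ hcst) hles
  · rintro c ⟨T, hcst, rfl⟩
    exact lb T hcst
end

section
/- Let ⟨I, S⟩ be an X3C instance with |I| = 3η items, μ ≥ η sets, each item contained in at most 3 sets, let M be a positive integer, and let the unweighted graph G with its clustering and vertices s = u_1^0 and t = u_μ^3 be the associated CluSP instance. If ⟨I, S⟩ admits an exact cover, then there exists a clustered s–t path in G with at most 15μ edges. -/
open SimpleGraph

/-- Vertices of the CluSP hardness graph associated with an X3C instance:
`u j t` (t = 0,1,2,3) for each set `S j`; `item i` is the vertex `v_i`;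
`ipath i j t` are the vertices of the length-`M` path attached to `v_i`
corresponding to the set `S j` containing item `i` (its last vertex, with
`t = M - 1`, is the vertex `v_i^h`); `y z` and `ypath z j t` similarly form the
`y`-gadgets (the last path vertex is `y_z^j`). -/
inductive XVtx (η μ M : ℕ) where
  | u : Fin μ → Fin 4 → XVtx η μ M
  | item : Fin (3 * η) → XVtx η μ M
  | ipath : Fin (3 * η) → Fin μ → Fin M → XVtx η μ M
  | y : Fin (μ - η) → XVtx η μ M
  | ypath : Fin (μ - η) → Fin μ → Fin M → XVtx η μ M
  deriving DecidableEq

/-- The rank (0, 1 or 2) of item `i` within the 3-element set `S j`. -/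
def rankIn {η μ : ℕ} (S : Fin μ → Finset (Fin (3 * η))) (i : Fin (3 * η)) (j : Fin μ) : ℕ :=
  ((S j).filter (· < i)).card

/-- Base adjacency relation of the X3C reduction graph. -/
def xRel {η μ M : ℕ} (S : Fin μ → Finset (Fin (3 * η))) :
    XVtx η μ M → XVtx η μ M → Prop
  | .u j t, .u j' t' => (t : ℕ) = 3 ∧ (t' : ℕ) = 0 ∧ (j : ℕ) + 1 = (j' : ℕ)
  | .u j t, .ipath i j' t' => j = j' ∧ i ∈ S j ∧ (t' : ℕ) = M - 1 ∧
      ((t : ℕ) = rankIn S i j ∨ (t : ℕ) = rankIn S i j + 1)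
  | .item i, .ipath i' j t => i = i' ∧ i ∈ S j ∧ (t : ℕ) = 0
  | .ipath i j t, .ipath i' j' t' => i = i' ∧ j = j' ∧ i ∈ S j ∧ (t' : ℕ) = (t : ℕ) + 1
  | .y z, .ypath z' _ t => z = z' ∧ (t : ℕ) = 0
  | .ypath z j t, .ypath z' j' t' => z = z' ∧ j = j' ∧ (t' : ℕ) = (t : ℕ) + 1
  | .u j t, .ypath _ j' t' => j = j' ∧ (t' : ℕ) = M - 1 ∧ ((t : ℕ) = 0 ∨ (t : ℕ) = 3)
  | _, _ => False

def xGraph {η μ M : ℕ} (S : Fin μ → Finset (Fin (3 * η))) : SimpleGraph (XVtx η μ M) :=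
  SimpleGraph.fromRel (xRel S)

/-- The clusters: for each item `i`, the vertex `v_i` together with all vertices of
the attached paths; for each `z`, the vertex `y_z` together with all vertices of its
attached paths; all remaining vertices lie in singleton clusters. -/
def xClusters (η μ M : ℕ) (S : Fin μ → Finset (Fin (3 * η))) : Set (Set (XVtx η μ M)) :=
  {Cl | (∃ i, Cl = {x | x = XVtx.item i ∨ ∃ j t, i ∈ S j ∧ x = XVtx.ipath i j t}) ∨
        (∃ z, Cl = {x | x = XVtx.y z ∨ ∃ j t, x = XVtx.ypath z j t}) ∨
        (∃ v, Cl = {v})}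

/-- The elements of `Cl` occurring in the list `l` occur consecutively. -/
def ConsecutiveIn {α : Type*} (Cl : Set α) (l : List α) : Prop :=
  ∃ l₁ l₂ l₃ : List α, l = l₁ ++ l₂ ++ l₃ ∧ (∀ x ∈ l₂, x ∈ Cl) ∧
    (∀ x ∈ l₁, x ∉ Cl) ∧ (∀ x ∈ l₃, x ∉ Cl)

/-- The X3C instance admits an exact cover: a subcollection of `η` of the sets
covering each item exactly once. -/
def HasExactCover {η μ : ℕ} (S : Fin μ → Finset (Fin (3 * η))) : Prop :=
  ∃ E : Finset (Fin μ), E.card = η ∧ ∀ i : Fin (3 * η), ∃! j, j ∈ E ∧ i ∈ S j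

namespace XAux

lemma consec_of_unique {α : Type*} (Cl : Set α) :
    ∀ l : List α, l.Nodup → (∀ x ∈ l, ∀ y ∈ l, x ∈ Cl → y ∈ Cl → x = y) →
    ConsecutiveIn Cl l := by
  intro l
  induction l with
  | nil => exact fun _ _ => ⟨[], [], [], by simp, by simp, by simp, by simp⟩
  | cons a l ih =>
    intro hnd h
    by_cases ha : a ∈ Cl
    · refine ⟨[], [a], l, by simp, by simpa, by simp, ?_⟩
      intro x hx hxCl
      have := h x (by simp [hx]) a (by simp) hxCl ha
      exact (List.nodup_cons.mp hnd).1 (this ▸ hx)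
    · obtain ⟨l₁, l₂, l₃, hdec, h2, h1, h3⟩ :=
        ih (List.nodup_cons.mp hnd).2
          (fun x hx y hy => h x (by simp [hx]) y (by simp [hy]))
      exact ⟨a :: l₁, l₂, l₃, by simp [hdec], h2, by
        intro x hx; rcases List.mem_cons.mp hx with rfl | hx
        · exact ha
        · exact h1 x hx, h3⟩

def last {M : ℕ} (h : 0 < M) : Fin M := ⟨M - 1, by omega⟩

variable {η μ M : ℕ} (S : Fin μ → Finset (Fin (3 * η))) (hcard : ∀ j, (S j).card = 3)
  (hM : 0 < M)

def itemOf (j : Fin μ) (k : Fin 3) : Fin (3 * η) :=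
  ((S j).orderIsoOfFin (hcard j) k : Fin (3 * η))

lemma itemOf_mem (j : Fin μ) (k : Fin 3) : itemOf S hcard j k ∈ S j :=
  ((S j).orderIsoOfFin (hcard j) k).2

lemma itemOf_lt {j : Fin μ} {k k' : Fin 3} (h : k < k') :
    itemOf S hcard j k < itemOf S hcard j k' := by
  have := ((S j).orderIsoOfFin (hcard j)).lt_iff_lt.mpr h
  exact Subtype.coe_lt_coe.mpr this

lemma rank_itemOf (j : Fin μ) (k : Fin 3) :
    rankIn S (itemOf S hcard j k) j = (k : ℕ) := by
  classical
  have key : (S j).filter (· < itemOf S hcard j k) =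
      (Finset.univ.filter (· < k)).image (fun m => itemOf S hcard j m) := by
    ext x
    simp only [Finset.mem_filter, Finset.mem_image, Finset.mem_univ, true_and]
    constructor
    · rintro ⟨hx, hlt⟩
      refine ⟨((S j).orderIsoOfFin (hcard j)).symm ⟨x, hx⟩, ?_, by simp [itemOf]⟩
      rw [← ((S j).orderIsoOfFin (hcard j)).lt_iff_lt]
      simpa [itemOf] using Subtype.coe_lt_coe.mp (by simpa [itemOf] using hlt)
    · rintro ⟨m, hm, rfl⟩
      exact ⟨itemOf_mem S hcard j m, itemOf_lt S hcard hm⟩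
  rw [rankIn, key, Finset.card_image_of_injective _ (fun a b hab => ?_)]
  · fin_cases k <;> decide
  · by_contra hne
    rcases lt_or_gt_of_ne hne with h | h
    · exact absurd hab (ne_of_lt (itemOf_lt S hcard h))
    · exact absurd hab.symm (ne_of_lt (itemOf_lt S hcard h))

lemma adj12 {a b : XVtx η μ M} (hne : a ≠ b) (h : xRel S a b) : (xGraph S).Adj a b :=
  (SimpleGraph.fromRel_adj _ _ _).mpr ⟨hne, Or.inl h⟩

lemma adj_u_ip (j : Fin μ) (k : Fin 4) (i : Fin (3 * η)) (hi : i ∈ S j)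
    (h : (k : ℕ) = rankIn S i j ∨ (k : ℕ) = rankIn S i j + 1) :
    (xGraph S).Adj (XVtx.u j k) (XVtx.ipath i j (last hM)) :=
  adj12 S (by simp) ⟨rfl, hi, rfl, h⟩

lemma adj_u_yp (j : Fin μ) (k : Fin 4) (z : Fin (μ - η))
    (h : (k : ℕ) = 0 ∨ (k : ℕ) = 3) :
    (xGraph S).Adj (XVtx.u j k) (XVtx.ypath z j (last hM)) :=
  adj12 S (by simp) ⟨rfl, rfl, h⟩

lemma adj_uu (j j' : Fin μ) (h : (j : ℕ) + 1 = (j' : ℕ)) :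
    (xGraph S).Adj (XVtx.u j ⟨3, by decide⟩ : XVtx η μ M) (XVtx.u j' ⟨0, by decide⟩) :=
  adj12 S (by simp) ⟨rfl, rfl, h⟩

def topSeg (j : Fin μ) :
    (xGraph S).Walk (XVtx.u j ⟨0, by decide⟩ : XVtx η μ M) (XVtx.u j ⟨3, by decide⟩) :=
  .cons (adj_u_ip S hM j ⟨0, by decide⟩ (itemOf S hcard j 0) (itemOf_mem S hcard j 0)
      (Or.inl (by rw [rank_itemOf S hcard j 0]; rfl)))
  (.cons (adj_u_ip S hM j ⟨1, by omega⟩ (itemOf S hcard j 0) (itemOf_mem S hcard j 0)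
      (Or.inr (by rw [rank_itemOf S hcard j 0]; rfl))).symm
  (.cons (adj_u_ip S hM j ⟨1, by omega⟩ (itemOf S hcard j 1) (itemOf_mem S hcard j 1)
      (Or.inl (by rw [rank_itemOf S hcard j 1]; rfl)))
  (.cons (adj_u_ip S hM j ⟨2, by omega⟩ (itemOf S hcard j 1) (itemOf_mem S hcard j 1)
      (Or.inr (by rw [rank_itemOf S hcard j 1]; rfl))).symm
  (.cons (adj_u_ip S hM j ⟨2, by omega⟩ (itemOf S hcard j 2) (itemOf_mem S hcard j 2)
      (Or.inl (by rw [rank_itemOf S hcard j 2]; rfl)))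
  (.cons (adj_u_ip S hM j ⟨3, by decide⟩ (itemOf S hcard j 2) (itemOf_mem S hcard j 2)
      (Or.inr (by rw [rank_itemOf S hcard j 2]; rfl))).symm
  .nil)))))

def botSeg (j : Fin μ) (z : Fin (μ - η)) :
    (xGraph S).Walk (XVtx.u j ⟨0, by decide⟩ : XVtx η μ M) (XVtx.u j ⟨3, by decide⟩) :=
  .cons (adj_u_yp S hM j ⟨0, by decide⟩ z (Or.inl rfl))
  (.cons (adj_u_yp S hM j ⟨3, by decide⟩ z (Or.inr rfl)).symm .nil)

lemma topSeg_support (j : Fin μ) :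
    (topSeg S hcard hM j).support =
      [XVtx.u j ⟨0, by decide⟩, XVtx.ipath (itemOf S hcard j 0) j (last hM),
       XVtx.u j ⟨1, by omega⟩, XVtx.ipath (itemOf S hcard j 1) j (last hM),
       XVtx.u j ⟨2, by omega⟩, XVtx.ipath (itemOf S hcard j 2) j (last hM),
       XVtx.u j ⟨3, by decide⟩] := by
  simp [topSeg]

lemma botSeg_support (j : Fin μ) (z : Fin (μ - η)) :
    (botSeg S hM j z).support =
      [XVtx.u j ⟨0, by decide⟩, XVtx.ypath z j (last hM), XVtx.u j ⟨3, by decide⟩] := by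
  simp [botSeg]

lemma itemOf_ne {j : Fin μ} {k k' : Fin 3} (h : k ≠ k') :
    itemOf S hcard j k ≠ itemOf S hcard j k' := by
  rcases lt_or_gt_of_ne h with h | h
  · exact ne_of_lt (itemOf_lt S hcard h)
  · exact (ne_of_lt (itemOf_lt S hcard h)).symm

lemma topSeg_isPath (j : Fin μ) : (topSeg S hcard hM j).IsPath := by
  rw [SimpleGraph.Walk.isPath_def, topSeg_support]
  have h01 := itemOf_ne S hcard (j := j) (k := 0) (k' := 1) (by decide)
  have h02 := itemOf_ne S hcard (j := j) (k := 0) (k' := 2) (by decide)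
  have h12 := itemOf_ne S hcard (j := j) (k := 1) (k' := 2) (by decide)
  simp_all [List.nodup_cons, XVtx.ipath.injEq]

lemma botSeg_isPath (j : Fin μ) (z : Fin (μ - η)) : (botSeg S hM j z).IsPath := by
  rw [SimpleGraph.Walk.isPath_def, botSeg_support]
  simp

variable (E : Finset (Fin μ)) (zfun : ∀ j : Fin μ, j ∉ E → Fin (μ - η))

def seg (j : Fin μ) :
    (xGraph S).Walk (XVtx.u j ⟨0, by decide⟩ : XVtx η μ M) (XVtx.u j ⟨3, by decide⟩) :=
  if h : j ∈ E then topSeg S hcard hM j else botSeg S hM j (zfun j h)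

def SegSup (j : Fin μ) (v : XVtx η μ M) : Prop :=
  (∃ t, v = XVtx.u j t) ∨
  (j ∈ E ∧ ∃ i ∈ S j, v = XVtx.ipath i j (last hM)) ∨
  (∃ h : j ∉ E, v = XVtx.ypath (zfun j h) j (last hM))

lemma seg_isPath (j : Fin μ) : (seg S hcard hM E zfun j).IsPath := by
  unfold seg
  split
  · exact topSeg_isPath S hcard hM j
  · exact botSeg_isPath S hM j _

lemma seg_length (j : Fin μ) : (seg S hcard hM E zfun j).length ≤ 6 := by
  unfold seg
  split
  · simp [topSeg]
  · simp [botSeg]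

lemma seg_support {j : Fin μ} {v : XVtx η μ M}
    (hv : v ∈ (seg S hcard hM E zfun j).support) : SegSup S hM E zfun j v := by
  unfold seg at hv
  split at hv
  case isTrue h =>
    rw [topSeg_support] at hv
    simp only [List.mem_cons, List.not_mem_nil, or_false] at hv
    rcases hv with rfl | rfl | rfl | rfl | rfl | rfl | rfl
    · exact Or.inl ⟨_, rfl⟩
    · exact Or.inr (Or.inl ⟨h, _, itemOf_mem S hcard j 0, rfl⟩)
    · exact Or.inl ⟨_, rfl⟩
    · exact Or.inr (Or.inl ⟨h, _, itemOf_mem S hcard j 1, rfl⟩)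
    · exact Or.inl ⟨_, rfl⟩
    · exact Or.inr (Or.inl ⟨h, _, itemOf_mem S hcard j 2, rfl⟩)
    · exact Or.inl ⟨_, rfl⟩
  case isFalse h =>
    rw [botSeg_support] at hv
    simp only [List.mem_cons, List.not_mem_nil, or_false] at hv
    rcases hv with rfl | rfl | rfl
    · exact Or.inl ⟨_, rfl⟩
    · exact Or.inr (Or.inr ⟨h, rfl⟩)
    · exact Or.inl ⟨_, rfl⟩

lemma segSup_index {j j' : Fin μ} {v : XVtx η μ M}
    (h1 : SegSup S hM E zfun j v) (h2 : SegSup S hM E zfun j' v) : j = j' := by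
  rcases h1 with ⟨t, rfl⟩ | ⟨hE1, i, hi, rfl⟩ | ⟨hn1, rfl⟩ <;>
    rcases h2 with ⟨t', h⟩ | ⟨hE2, i', hi', h⟩ | ⟨hn2, h⟩ <;> simp_all

def mainWalk : (n : ℕ) → (hn : n < μ) →
    (xGraph S).Walk (XVtx.u ⟨μ - 1 - n, by omega⟩ ⟨0, by decide⟩ : XVtx η μ M)
      (XVtx.u ⟨μ - 1, by omega⟩ ⟨3, by decide⟩)
  | 0, h => seg S hcard hM E zfun ⟨μ - 1, by omega⟩
  | n + 1, h =>
    (seg S hcard hM E zfun ⟨μ - 1 - (n + 1), by omega⟩).append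
      (.cons (adj_uu S ⟨μ - 1 - (n + 1), by omega⟩ ⟨μ - 1 - n, by omega⟩
          (by simp; omega))
        (mainWalk n (by omega)))

lemma mainWalk_support : ∀ (n : ℕ) (h : n < μ) (v : XVtx η μ M),
    v ∈ (mainWalk S hcard hM E zfun n h).support →
    ∃ j' : Fin μ, μ - 1 - n ≤ (j' : ℕ) ∧ SegSup S hM E zfun j' v := by
  intro n
  induction n with
  | zero =>
    intro h v hv
    simp only [mainWalk] at hv
    exact ⟨⟨μ - 1, by omega⟩, le_refl _, seg_support S hcard hM E zfun hv⟩
  | succ n ih =>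
    intro h v hv
    simp only [mainWalk, SimpleGraph.Walk.support_append, SimpleGraph.Walk.support_cons,
      List.tail_cons, List.mem_append] at hv
    rcases hv with hv | hv
    · exact ⟨⟨μ - 1 - (n + 1), by omega⟩, le_refl _, seg_support S hcard hM E zfun hv⟩
    · obtain ⟨j', hj', hs⟩ := ih (by omega) v hv
      exact ⟨j', by omega, hs⟩

lemma mainWalk_isPath : ∀ (n : ℕ) (h : n < μ),
    (mainWalk S hcard hM E zfun n h).IsPath := by
  intro n
  induction n with
  | zero =>
    intro h
    simp only [mainWalk]
    exact seg_isPath S hcard hM E zfun _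
  | succ n ih =>
    intro h
    rw [SimpleGraph.Walk.isPath_def]
    simp only [mainWalk, SimpleGraph.Walk.support_append, SimpleGraph.Walk.support_cons,
      List.tail_cons]
    rw [List.nodup_append]
    refine ⟨(seg_isPath S hcard hM E zfun _).support_nodup,
      ((ih (by omega)).support_nodup), ?_⟩
    intro v hv w hv' hvw
    subst hvw
    have h1 := seg_support S hcard hM E zfun hv
    obtain ⟨j', hj', h2⟩ := mainWalk_support S hcard hM E zfun n (by omega) v hv'
    have := segSup_index S hM E zfun h1 h2
    have : (⟨μ - 1 - (n + 1), by omega⟩ : Fin μ) = j' := this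
    have hval : μ - 1 - (n + 1) = (j' : ℕ) := congrArg Fin.val this
    omega

lemma mainWalk_length : ∀ (n : ℕ) (h : n < μ),
    (mainWalk S hcard hM E zfun n h).length ≤ 7 * n + 6 := by
  intro n
  induction n with
  | zero =>
    intro h
    simp only [mainWalk]
    exact seg_length S hcard hM E zfun _
  | succ n ih =>
    intro h
    simp only [mainWalk, SimpleGraph.Walk.length_append, SimpleGraph.Walk.length_cons]
    have := seg_length S hcard hM E zfun (⟨μ - 1 - (n + 1), by omega⟩ : Fin μ)
    have := ih (by omega)
    omega

end XAux

theorem stmt14 (η μ M : ℕ) (hμpos : 0 < μ) (hημ : η ≤ μ) (hM : 0 < M)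
    (S : Fin μ → Finset (Fin (3 * η)))
    (hcard : ∀ j, (S j).card = 3)
    (hocc : ∀ i, (Finset.univ.filter fun j => i ∈ S j).card ≤ 3)
    (hcover : HasExactCover S) :
    ∃ p : (xGraph S : SimpleGraph (XVtx η μ M)).Walk
        (XVtx.u ⟨0, hμpos⟩ ⟨0, by omega⟩) (XVtx.u ⟨μ - 1, by omega⟩ ⟨3, by omega⟩),
      p.IsPath ∧ (∀ Cl ∈ xClusters η μ M S, ConsecutiveIn Cl p.support) ∧
      p.length ≤ 15 * μ := by
  classical
  obtain ⟨E, hEcard, hEuniq⟩ := hcover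
  have hcompl : Eᶜ.card = μ - η := by
    rw [Finset.card_compl, hEcard]; simp
  let zequiv := Eᶜ.equivFinOfCardEq hcompl
  let zfun : ∀ j : Fin μ, j ∉ E → Fin (μ - η) :=
    fun j h => zequiv ⟨j, Finset.mem_compl.mpr h⟩
  have hμ1 : μ - 1 < μ := by omega
  have e1 : (XVtx.u ⟨μ - 1 - (μ - 1), by omega⟩ ⟨0, by omega⟩ : XVtx η μ M) =
      XVtx.u ⟨0, hμpos⟩ ⟨0, by omega⟩ := by
    rw [show (⟨μ - 1 - (μ - 1), by omega⟩ : Fin μ) = ⟨0, hμpos⟩ from Fin.ext (by simp)]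
  refine ⟨(XAux.mainWalk S hcard hM E zfun (μ - 1) hμ1).copy e1 rfl, ?_, ?_, ?_⟩
  · simpa using XAux.mainWalk_isPath S hcard hM E zfun (μ - 1) hμ1
  · intro Cl hCl
    apply XAux.consec_of_unique
    · rw [SimpleGraph.Walk.support_copy]
      exact (XAux.mainWalk_isPath S hcard hM E zfun (μ - 1) hμ1).support_nodup
    · intro x hx y hy hxCl hyCl
      rw [SimpleGraph.Walk.support_copy] at hx hy
      obtain ⟨jx, _, hSx⟩ := XAux.mainWalk_support S hcard hM E zfun (μ - 1) hμ1 x hx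
      obtain ⟨jy, _, hSy⟩ := XAux.mainWalk_support S hcard hM E zfun (μ - 1) hμ1 y hy
      rcases hCl with ⟨i, rfl⟩ | ⟨z, rfl⟩ | ⟨v0, rfl⟩
      · -- item cluster
        rcases hSx with ⟨t, rfl⟩ | ⟨hEx, ix, hix, rfl⟩ | ⟨hnx, rfl⟩
        · simp only [Set.mem_setOf_eq] at hxCl
          rcases hxCl with h | ⟨j, t', _, h⟩ <;> exact absurd h (by simp)
        · rcases hSy with ⟨t, rfl⟩ | ⟨hEy, iy, hiy, rfl⟩ | ⟨hny, rfl⟩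
          · simp only [Set.mem_setOf_eq] at hyCl
            rcases hyCl with h | ⟨j, t', _, h⟩ <;> exact absurd h (by simp)
          · simp only [Set.mem_setOf_eq] at hxCl hyCl
            rcases hxCl with h | ⟨j, t', _, h⟩
            · exact absurd h (by simp)
            · rcases hyCl with h' | ⟨j', t'', _, h'⟩
              · exact absurd h' (by simp)
              · injection h with h1 h2 h3
                injection h' with h1' h2' h3'
                have hj : jx = jy := by
                  rw [h2, h2']
                  exact (hEuniq i).unique ⟨h2 ▸ hEx, h2 ▸ h1 ▸ hix⟩ ⟨h2' ▸ hEy, h2' ▸ h1' ▸ hiy⟩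
                have hi : ix = iy := h1.trans h1'.symm
                rw [hi, hj]
          · simp only [Set.mem_setOf_eq] at hyCl
            rcases hyCl with h | ⟨j, t', _, h⟩ <;> exact absurd h (by simp)
        · simp only [Set.mem_setOf_eq] at hxCl
          rcases hxCl with h | ⟨j, t', _, h⟩ <;> exact absurd h (by simp)
      · -- y cluster
        rcases hSx with ⟨t, rfl⟩ | ⟨hEx, ix, hix, rfl⟩ | ⟨hnx, rfl⟩
        · simp only [Set.mem_setOf_eq] at hxCl
          rcases hxCl with h | ⟨j, t', h⟩ <;> exact absurd h (by simp)
        · simp only [Set.mem_setOf_eq] at hxCl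
          rcases hxCl with h | ⟨j, t', h⟩ <;> exact absurd h (by simp)
        · rcases hSy with ⟨t, rfl⟩ | ⟨hEy, iy, hiy, rfl⟩ | ⟨hny, rfl⟩
          · simp only [Set.mem_setOf_eq] at hyCl
            rcases hyCl with h | ⟨j, t', h⟩ <;> exact absurd h (by simp)
          · simp only [Set.mem_setOf_eq] at hyCl
            rcases hyCl with h | ⟨j, t', h⟩ <;> exact absurd h (by simp)
          · simp only [Set.mem_setOf_eq] at hxCl hyCl
            rcases hxCl with h | ⟨j, t', h⟩
            · exact absurd h (by simp)
            · rcases hyCl with h' | ⟨j', t'', h'⟩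
              · exact absurd h' (by simp)
              · injection h with h1 h2 h3
                injection h' with h1' h2' h3'
                have hzz : zequiv ⟨jx, Finset.mem_compl.mpr hnx⟩ =
                    zequiv ⟨jy, Finset.mem_compl.mpr hny⟩ := h1.trans h1'.symm
                have hj : jx = jy := congrArg Subtype.val (zequiv.injective hzz)
                subst hj
                rfl
      · -- singleton cluster
        simp only [Set.mem_singleton_iff] at hxCl hyCl
        rw [hxCl, hyCl]
  · rw [SimpleGraph.Walk.length_copy]
    have := XAux.mainWalk_length S hcard hM E zfun (μ - 1) hμ1
    omega
end
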